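/- arXiv:2103.14510 — 6 statements merged into one kernel-verified Lean document; each statement's English description precedes it below -/
import Mathlib

section
/- Let d ≥ 1, let ρ be a positive semidefinite (d+1)×(d+1) complex matrix with ρ·e_⊥ = 0, and let Π be an arbitrary (d+1)×(d+1) complex matrix. Then tr((Π ⊗ Π) · V ρ V†) = (e_⊥† Π e_⊥) · tr(Π ρ) + e_⊥† Π ρ Π e_⊥, where ⊗ is the Kronecker product. -/
open Matrix Kronecker
open scoped ComplexOrder

/-- The last standard basis vector `e_⊥ = e_d` of `ℂ^{d+1}`. -/
noncomputable def perp (d : ℕ) : Fin (d + 1) → ℂ :=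
  fun i => if i = Fin.last d then 1 else 0

/-- The cloning map `V : ℂ^{d+1} → ℂ^{d+1} ⊗ ℂ^{d+1}`,
`V_{(i,j),k} = (1/√2)(δ_{i,d} δ_{j,k} + δ_{i,k} δ_{j,d})`. -/
noncomputable def cloneV (d : ℕ) : Matrix (Fin (d + 1) × Fin (d + 1)) (Fin (d + 1)) ℂ :=
  fun p k => ((1 / Real.sqrt 2 : ℝ) : ℂ) *
    ((if p.1 = Fin.last d then 1 else 0) * (if p.2 = k then 1 else 0) +
     (if p.1 = k then 1 else 0) * (if p.2 = Fin.last d then 1 else 0))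

lemma clone_entry (d : ℕ) (ρ : Matrix (Fin (d + 1)) (Fin (d + 1)) ℂ)
    (q p : Fin (d+1) × Fin (d+1)) :
    (cloneV d * ρ * (cloneV d)ᴴ) q p = (1/2 : ℂ) *
      ((if q.1 = Fin.last d then 1 else 0) * (if p.1 = Fin.last d then 1 else 0) * ρ q.2 p.2 +
       (if q.1 = Fin.last d then 1 else 0) * (if p.2 = Fin.last d then 1 else 0) * ρ q.2 p.1 +
       (if q.2 = Fin.last d then 1 else 0) * (if p.1 = Fin.last d then 1 else 0) * ρ q.1 p.2 +
       (if q.2 = Fin.last d then 1 else 0) * (if p.2 = Fin.last d then 1 else 0) * ρ q.1 p.1) := by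
  have hr : (1 / Real.sqrt 2) * (1 / Real.sqrt 2) = (1/2 : ℝ) := by
    rw [div_mul_div_comm, Real.mul_self_sqrt] <;> norm_num
  have hc : ((1 / Real.sqrt 2 : ℝ) : ℂ) * ((1 / Real.sqrt 2 : ℝ) : ℂ) = 1/2 := by
    rw [← Complex.ofReal_mul, hr]
    norm_num
  have hc' : (((Real.sqrt 2)⁻¹ : ℝ) : ℂ) ^ 2 = 1/2 := by
    rw [Complex.ofReal_inv]
    have h2 : ((Real.sqrt 2 : ℝ) : ℂ) ^ 2 = 2 := by
      rw [← Complex.ofReal_pow, Real.sq_sqrt] <;> norm_num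
    rw [inv_pow, h2]
    norm_num
  simp only [Matrix.mul_apply, Matrix.conjTranspose_apply, cloneV, star_mul', star_add,
    apply_ite (star : ℂ → ℂ), star_one, star_zero, Complex.star_def, Complex.conj_ofReal]
  by_cases h1 : q.1 = Fin.last d <;> by_cases h2 : q.2 = Fin.last d <;>
    by_cases h3 : p.1 = Fin.last d <;> by_cases h4 : p.2 = Fin.last d <;>
  · simp only [h1, h2, h3, h4, if_true, if_false, mul_add, add_mul, ite_mul, mul_ite,
      mul_zero, zero_mul, mul_one, one_mul, Finset.sum_add_distrib, Finset.sum_ite_eq,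
      Finset.sum_ite_eq', Finset.mem_univ, if_true]
    ring_nf
    try simp only [hc', Finset.sum_const_zero]
    try ring

/-- For `ρ ⪰ 0` with `ρ e_⊥ = 0` and arbitrary `Π`,
`tr((Π ⊗ Π) V ρ V†) = (e_⊥† Π e_⊥)·tr(Π ρ) + e_⊥† Π ρ Π e_⊥`. -/
theorem trace_kronecker_clone (d : ℕ) (hd : 1 ≤ d)
    (ρ P : Matrix (Fin (d + 1)) (Fin (d + 1)) ℂ)
    (hρ : ρ.PosSemidef) (hρperp : ρ *ᵥ perp d = 0) :
    Matrix.trace ((P ⊗ₖ P) * (cloneV d * ρ * (cloneV d)ᴴ)) =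
      (star (perp d) ⬝ᵥ (P *ᵥ perp d)) * Matrix.trace (P * ρ) +
        star (perp d) ⬝ᵥ ((P * ρ * P) *ᵥ perp d) := by
  have texp : ∀ {n : Type} [Fintype n]
      (A B : Matrix n n ℂ), Matrix.trace (A * B) = ∑ p, ∑ q, A p q * B q p := by
    intro n _ A B
    simp [Matrix.trace, Matrix.diag, Matrix.mul_apply]
  rw [texp]
  simp only [clone_entry]
  simp only [Matrix.kroneckerMap_apply, perp, Matrix.mulVec, dotProduct,
    Pi.star_apply, apply_ite (star : ℂ → ℂ), star_one, star_zero, Fintype.sum_prod_type,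
    Matrix.trace, Matrix.diag, Matrix.mul_apply]
  simp only [mul_add, add_mul, ite_mul, mul_ite, mul_zero, zero_mul, mul_one, one_mul,
    Finset.sum_add_distrib, Finset.sum_ite_irrel, Finset.sum_const_zero,
    Finset.sum_ite_eq, Finset.sum_ite_eq', Finset.mem_univ, if_true]
  simp only [Finset.mul_sum, Finset.sum_mul, ← Finset.sum_add_distrib]
  refine Finset.sum_congr rfl fun x _ => ?_
  refine Finset.sum_congr rfl fun y _ => ?_
  ring
end

section
/- Let d ≥ 1, let σ be a positive semidefinite (d+1)×(d+1) complex matrix with trace 1 and σ·e_⊥ = 0, and let Π be a Hermitian (d+1)×(d+1) complex matrix with Π·σ = 0. Then tr(((1−Π) ⊗ (1−Π)) · V σ V†) = 1 − e_⊥† Π e_⊥, where 1 denotes the identity matrix and ⊗ is the Kronecker product. -/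
open Matrix Kronecker
open scoped ComplexOrder

theorem cloneV_form (d : ℕ) (σ : Matrix (Fin (d+1)) (Fin (d+1)) ℂ) :
    cloneV d * σ * (cloneV d)ᴴ = Matrix.of fun p q => (1/2 : ℂ) *
      ((if p.1 = Fin.last d then 1 else 0) * (if q.1 = Fin.last d then 1 else 0) * σ p.2 q.2
      + (if p.1 = Fin.last d then 1 else 0) * (if q.2 = Fin.last d then 1 else 0) * σ p.2 q.1
      + (if p.2 = Fin.last d then 1 else 0) * (if q.1 = Fin.last d then 1 else 0) * σ p.1 q.2
      + (if p.2 = Fin.last d then 1 else 0) * (if q.2 = Fin.last d then 1 else 0) * σ p.1 q.1) := by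
  have hc : ((Real.sqrt 2 : ℂ))⁻¹ * ((Real.sqrt 2 : ℂ))⁻¹ = 1/2 := by
    rw [← mul_inv, ← Complex.ofReal_mul, Real.mul_self_sqrt (by norm_num)]
    norm_num
  ext ⟨i,j⟩ ⟨k,l⟩
  simp only [Matrix.mul_apply, conjTranspose_apply, cloneV, Matrix.of_apply]
  simp only [star_mul', star_add, star_one, star_zero, apply_ite (star : ℂ → ℂ), Complex.star_def,
    Complex.conj_ofReal]
  simp only [add_mul, mul_add, ite_mul, mul_ite, mul_one, mul_zero, one_mul, zero_mul,
    Finset.sum_add_distrib, Finset.mul_sum, Finset.sum_ite_eq, Finset.sum_ite_eq',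
    Finset.mem_univ, if_true]
  by_cases hi : i = Fin.last d <;> by_cases hj : j = Fin.last d <;>
    by_cases hk : k = Fin.last d <;> by_cases hl : l = Fin.last d <;>
    simp [hi, hj, hk, hl, Finset.sum_ite_eq, Finset.sum_ite_eq', sq] <;>
    first
      | tauto
      | (ring_nf; simp [sq, hc, mul_comm, mul_assoc, mul_left_comm]; try ring_nf; try tauto)

/-- For a density matrix `σ` with `σ e_⊥ = 0` and a Hermitian `Π` with `Π σ = 0`,
`tr(((1−Π) ⊗ (1−Π)) V σ V†) = 1 − e_⊥† Π e_⊥`. -/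
theorem trace_kronecker_clone_complement (d : ℕ) (hd : 1 ≤ d)
    (σ P : Matrix (Fin (d + 1)) (Fin (d + 1)) ℂ)
    (hσ : σ.PosSemidef) (htr : Matrix.trace σ = 1) (hσperp : σ *ᵥ perp d = 0)
    (hP : Pᴴ = P) (hPσ : P * σ = 0) :
    Matrix.trace (((1 - P) ⊗ₖ (1 - P)) * (cloneV d * σ * (cloneV d)ᴴ)) =
      1 - star (perp d) ⬝ᵥ (P *ᵥ perp d) := by
  set ld := Fin.last d
  set Q : Matrix (Fin (d+1)) (Fin (d+1)) ℂ := 1 - P with hQ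
  -- basic facts
  have hσH : σᴴ = σ := hσ.1
  have hσcol : ∀ i, σ i ld = 0 := by
    intro i
    have := congrFun hσperp i
    simpa [Matrix.mulVec, dotProduct, perp, Finset.sum_ite_eq'] using this
  have hσrow : ∀ j, σ ld j = 0 := by
    intro j
    have := congrFun (congrFun hσH j) ld
    simp only [conjTranspose_apply] at this
    rw [hσcol j] at this
    exact star_eq_zero.mp this
  have hσP : σ * P = 0 := by
    have h := congrArg conjTranspose hPσ
    rwa [conjTranspose_mul, hP, hσH, conjTranspose_zero] at h
  have hQσ : Q * σ = σ := by rw [hQ, sub_mul, one_mul, hPσ, sub_zero]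
  have hσQ : σ * Q = σ := by rw [hQ, mul_sub, mul_one, hσP, sub_zero]
  have htrQσ : Matrix.trace (Q * σ) = 1 := by rw [hQσ, htr]
  -- sum versions
  have hsum1 : ∑ j : Fin (d+1), ∑ x : Fin (d+1), Q j x * σ x j = 1 := by
    have := htrQσ
    simpa [Matrix.trace, Matrix.mul_apply, Matrix.diag] using this
  have hcross1 : ∑ i : Fin (d+1), ∑ x : Fin (d+1), Q i ld * Q ld x * σ x i = 0 := by
    have h : (Q * σ * Q) ld ld = 0 := by rw [hQσ, hσQ]; exact hσcol ld
    calc ∑ i : Fin (d+1), ∑ x : Fin (d+1), Q i ld * Q ld x * σ x i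
        = ∑ i : Fin (d+1), ∑ x : Fin (d+1), Q ld x * σ x i * Q i ld := by
          congr 1; ext i; congr 1; ext x; ring
      _ = (Q * σ * Q) ld ld := by
          simp [Matrix.mul_apply, Finset.sum_mul, Finset.mul_sum]
          try rw [Finset.sum_comm]
      _ = 0 := h
  -- RHS value
  have hrhs : star (perp d) ⬝ᵥ (P *ᵥ perp d) = P ld ld := by
    simp [dotProduct, Matrix.mulVec, perp, Finset.sum_ite_eq', apply_ite (star : ℂ → ℂ)]
    rfl
  rw [cloneV_form, hrhs]
  -- expand trace
  rw [Matrix.trace]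
  simp only [Matrix.diag, Matrix.mul_apply, kroneckerMap_apply, Matrix.of_apply]
  rw [Fintype.sum_prod_type]
  simp only [Fintype.sum_prod_type]
  simp only [mul_add, Finset.sum_add_distrib, mul_ite, ite_mul, mul_one, mul_zero, one_mul,
    zero_mul, Finset.sum_ite_irrel, Finset.sum_const_zero, Finset.sum_ite_eq, Finset.sum_ite_eq',
    Finset.mem_univ, if_true]
  have pull : ∀ (c : ℂ) (f : Fin (d+1) → Fin (d+1) → ℂ),
      (∑ x : Fin (d+1), ∑ y : Fin (d+1), c * f x y)
        = c * ∑ x : Fin (d+1), ∑ y : Fin (d+1), f x y := by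
    intro c f
    rw [Finset.mul_sum]
    exact Finset.sum_congr rfl fun x _ => by rw [Finset.mul_sum]
  have hA : (∑ x : Fin (d+1), ∑ y : Fin (d+1), Q ld ld * Q x y * (1/2 * σ y x))
      = 1/2 * Q ld ld := by
    have h1 : (∑ x : Fin (d+1), ∑ y : Fin (d+1), Q ld ld * Q x y * (1/2 * σ y x))
        = ∑ x : Fin (d+1), ∑ y : Fin (d+1), (1/2 * Q ld ld) * (Q x y * σ y x) :=
      Finset.sum_congr rfl fun x _ => Finset.sum_congr rfl fun y _ => by ring
    rw [h1, pull, hsum1, mul_one]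
  have hD : (∑ x : Fin (d+1), ∑ y : Fin (d+1), Q x y * Q ld ld * (1/2 * σ y x))
      = 1/2 * Q ld ld := by
    have h1 : (∑ x : Fin (d+1), ∑ y : Fin (d+1), Q x y * Q ld ld * (1/2 * σ y x))
        = ∑ x : Fin (d+1), ∑ y : Fin (d+1), (1/2 * Q ld ld) * (Q x y * σ y x) :=
      Finset.sum_congr rfl fun x _ => Finset.sum_congr rfl fun y _ => by ring
    rw [h1, pull, hsum1, mul_one]
  have hB : (∑ x : Fin (d+1), ∑ y : Fin (d+1), Q x ld * Q ld y * (1/2 * σ y x)) = 0 := by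
    have h1 : (∑ x : Fin (d+1), ∑ y : Fin (d+1), Q x ld * Q ld y * (1/2 * σ y x))
        = ∑ x : Fin (d+1), ∑ y : Fin (d+1), (1/2 : ℂ) * (Q x ld * Q ld y * σ y x) :=
      Finset.sum_congr rfl fun x _ => Finset.sum_congr rfl fun y _ => by ring
    rw [h1, pull, hcross1, mul_zero]
  have hC : (∑ x : Fin (d+1), ∑ y : Fin (d+1), Q ld y * Q x ld * (1/2 * σ y x)) = 0 := by
    have h1 : (∑ x : Fin (d+1), ∑ y : Fin (d+1), Q ld y * Q x ld * (1/2 * σ y x))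
        = ∑ x : Fin (d+1), ∑ y : Fin (d+1), (1/2 : ℂ) * (Q x ld * Q ld y * σ y x) :=
      Finset.sum_congr rfl fun x _ => Finset.sum_congr rfl fun y _ => by ring
    rw [h1, pull, hcross1, mul_zero]
  rw [hA, hB, hC, hD]
  have hQld : Q ld ld = 1 - P ld ld := by simp [hQ, Matrix.sub_apply, Matrix.one_apply]
  rw [hQld]
  ring
end

section
/- Let d ≥ 1 and let ρ and σ be positive semidefinite (d+1)×(d+1) complex matrices, each of trace 1, such that ρ·σ = 0, ρ·e_⊥ = 0 and σ·e_⊥ = 0. Then there exists a (d+1)×(d+1) complex matrix Π which is an orthogonal projection (Π† = Π and Π·Π = Π) such that (1/2)·Re tr((Π ⊗ Π) · V ρ V†) + (1/2)·Re tr(((1−Π) ⊗ (1−Π)) · V σ V†) ≥ 1/2 + max(λ_max(ρ), λ_max(σ))/16. (This exhibits a simultaneous binary measurement strategy for two parties, showing that the simultaneous guessing probability of the bit labelling whether VρV† or VσV† was distributed between them is at least 1/2 + max(λ_max(ρ), λ_max(σ))/16.) -/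
open Matrix Kronecker
open scoped ComplexOrder

-- helper lemmas on vecMulVec
lemma vmv_mul {n : Type*} [Fintype n] [DecidableEq n] (w v : n → ℂ) (M : Matrix n n ℂ) :
    Matrix.vecMulVec w v * M = Matrix.vecMulVec w (v ᵥ* M) := by
  ext i j
  simp [Matrix.mul_apply, Matrix.vecMulVec_apply, Matrix.vecMul, dotProduct,
    Finset.mul_sum, mul_assoc]

lemma mul_vmv {n : Type*} [Fintype n] [DecidableEq n] (w v : n → ℂ) (M : Matrix n n ℂ) :
    M * Matrix.vecMulVec w v = Matrix.vecMulVec (M *ᵥ w) v := by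
  ext i j
  simp [Matrix.mul_apply, Matrix.vecMulVec_apply, Matrix.mulVec, dotProduct,
    Finset.sum_mul, mul_assoc]

lemma vmv_mulVec {n : Type*} [Fintype n] [DecidableEq n] (w v x : n → ℂ) :
    Matrix.vecMulVec w v *ᵥ x = (v ⬝ᵥ x) • w := by
  funext i
  simp only [Matrix.mulVec, Matrix.vecMulVec_apply, dotProduct, Pi.smul_apply,
    smul_eq_mul, Finset.sum_mul]
  exact Finset.sum_congr rfl fun k _ => by ring

lemma vmv_conjTranspose {n : Type*} [Fintype n] [DecidableEq n] (w : n → ℂ) :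
    (Matrix.vecMulVec w (star w))ᴴ = Matrix.vecMulVec w (star w) := by
  ext i j
  simp [Matrix.conjTranspose_apply, Matrix.vecMulVec_apply, mul_comm]

lemma vecMul_vmv {n : Type*} [Fintype n] [DecidableEq n] (x w v : n → ℂ) :
    x ᵥ* Matrix.vecMulVec w v = (x ⬝ᵥ w) • v := by
  funext j
  simp [Matrix.vecMul, Matrix.vecMulVec_apply, dotProduct, Finset.sum_mul, mul_assoc]

lemma trace_vmv {n : Type*} [Fintype n] [DecidableEq n] (w v : n → ℂ) :
    Matrix.trace (Matrix.vecMulVec w v) = v ⬝ᵥ w := by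
  simp [Matrix.trace, Matrix.vecMulVec_apply, dotProduct, mul_comm]

lemma sandwich_apply (d : ℕ) (ρ : Matrix (Fin (d+1)) (Fin (d+1)) ℂ)
    (p q : Fin (d+1) × Fin (d+1)) :
    (cloneV d * ρ * (cloneV d)ᴴ) p q = (1/2 : ℂ) *
      ((if p.1 = Fin.last d then 1 else 0) * (if q.1 = Fin.last d then 1 else 0) * ρ p.2 q.2 +
       (if p.1 = Fin.last d then 1 else 0) * (if q.2 = Fin.last d then 1 else 0) * ρ p.2 q.1 +
       (if p.2 = Fin.last d then 1 else 0) * (if q.1 = Fin.last d then 1 else 0) * ρ p.1 q.2 +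
       (if p.2 = Fin.last d then 1 else 0) * (if q.2 = Fin.last d then 1 else 0) * ρ p.1 q.1) := by
  have h2 : ((Real.sqrt 2 : ℝ) : ℂ)⁻¹ * ((Real.sqrt 2 : ℝ) : ℂ)⁻¹ = 1/2 := by
    rw [← Complex.ofReal_inv, ← Complex.ofReal_mul]
    rw [show (Real.sqrt 2)⁻¹ * (Real.sqrt 2)⁻¹ = 1/2 by
      rw [← mul_inv, Real.mul_self_sqrt (le_of_lt two_pos)]; norm_num]
    norm_num
  simp only [Matrix.mul_apply, conjTranspose_apply, cloneV, star_mul', star_add, star_one,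
    star_zero, apply_ite (star : ℂ → ℂ), Finset.sum_mul, Finset.mul_sum, RCLike.star_def,
    Complex.conj_ofReal]
  simp only [add_mul, mul_add, mul_ite, ite_mul, mul_zero, zero_mul, mul_one, one_mul,
    Finset.sum_add_distrib, Finset.sum_ite_irrel, Finset.sum_const_zero,
    Finset.sum_ite_eq, Finset.sum_ite_eq', Finset.mem_univ, if_true]

  have hcc : ((1/Real.sqrt 2 : ℝ):ℂ) * ((1/Real.sqrt 2 : ℝ):ℂ) = 1/2 := by
    push_cast; rw [one_div]; exact h2
  have hc3 : ∀ z : ℂ, ((1/Real.sqrt 2 : ℝ):ℂ) * z * ((1/Real.sqrt 2 : ℝ):ℂ) = 1/2 * z := by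
    intro z; rw [mul_right_comm, hcc]
  simp only [hc3]
  split_ifs <;> ring

lemma trace_kron (d : ℕ) (A B ρ : Matrix (Fin (d+1)) (Fin (d+1)) ℂ) :
    Matrix.trace ((A ⊗ₖ B) * (cloneV d * ρ * (cloneV d)ᴴ)) =
      (1/2 : ℂ) * (A (Fin.last d) (Fin.last d) * Matrix.trace (B*ρ)
        + B (Fin.last d) (Fin.last d) * Matrix.trace (A*ρ)
        + (A*ρ*B) (Fin.last d) (Fin.last d) + (B*ρ*A) (Fin.last d) (Fin.last d)) := by
  set M := cloneV d * ρ * (cloneV d)ᴴ with hM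
  have hs : ∀ p q, M p q = (1/2 : ℂ) *
      ((if p.1 = Fin.last d then 1 else 0) * (if q.1 = Fin.last d then 1 else 0) * ρ p.2 q.2 +
       (if p.1 = Fin.last d then 1 else 0) * (if q.2 = Fin.last d then 1 else 0) * ρ p.2 q.1 +
       (if p.2 = Fin.last d then 1 else 0) * (if q.1 = Fin.last d then 1 else 0) * ρ p.1 q.2 +
       (if p.2 = Fin.last d then 1 else 0) * (if q.2 = Fin.last d then 1 else 0) * ρ p.1 q.1) :=
    sandwich_apply d ρ
  simp only [Matrix.trace, Matrix.diag_apply, Matrix.mul_apply, kroneckerMap_apply,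
    Fintype.sum_prod_type, hs]
  simp only [add_mul, mul_add, mul_ite, ite_mul, mul_zero, zero_mul, mul_one, one_mul,
    Finset.sum_add_distrib, Finset.sum_ite_irrel, Finset.sum_const_zero,
    Finset.sum_ite_eq, Finset.sum_ite_eq', Finset.mem_univ, if_true,
    Finset.mul_sum, Finset.sum_mul]
  simp only [mul_comm, mul_left_comm, mul_assoc]
  ring

lemma exists_support_proj {n : ℕ} (σ : Matrix (Fin n) (Fin n) ℂ) (hσ : σ.IsHermitian) :
    ∃ P : Matrix (Fin n) (Fin n) ℂ, Pᴴ = P ∧ P * P = P ∧ P * σ = σ ∧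
      (∀ A : Matrix (Fin n) (Fin n) ℂ, A * σ = 0 → A * P = 0) ∧
      (∀ x : Fin n → ℂ, σ *ᵥ x = 0 → P *ᵥ x = 0) := by
  set U : Matrix (Fin n) (Fin n) ℂ := (Matrix.IsHermitian.eigenvectorUnitary hσ : Matrix (Fin n) (Fin n) ℂ) with hU
  have hUU : U * star U = 1 := Matrix.mem_unitaryGroup_iff.mp (Matrix.IsHermitian.eigenvectorUnitary hσ).2
  have hUU' : star U * U = 1 := Matrix.mem_unitaryGroup_iff'.mp (Matrix.IsHermitian.eigenvectorUnitary hσ).2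
  set D : Matrix (Fin n) (Fin n) ℂ := Matrix.diagonal (fun i => ((hσ.eigenvalues i : ℝ) : ℂ)) with hD
  have hspec : σ = U * D * star U := by
    have h := hσ.spectral_theorem
    rw [Unitary.conjStarAlgAut_apply] at h
    exact h
  set ev : Fin n → ℂ := fun i => if hσ.eigenvalues i = 0 then 0 else 1 with hev
  set P : Matrix (Fin n) (Fin n) ℂ := U * Matrix.diagonal ev * star U with hP
  have hDE : D * Matrix.diagonal ev = D := by
    rw [hD, Matrix.diagonal_mul_diagonal]
    rw [show (fun i => ((hσ.eigenvalues i : ℝ) : ℂ) * ev i) = fun i => ((hσ.eigenvalues i : ℝ) : ℂ) by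
      funext i; by_cases h : hσ.eigenvalues i = 0 <;> simp [hev, h]]
  have hED : Matrix.diagonal ev * D = D := by
    rw [hD, Matrix.diagonal_mul_diagonal]
    rw [show (fun i => ev i * ((hσ.eigenvalues i : ℝ) : ℂ)) = fun i => ((hσ.eigenvalues i : ℝ) : ℂ) by
      funext i; by_cases h : hσ.eigenvalues i = 0 <;> simp [hev, h]]
  refine ⟨P, ?_, ?_, ?_, ?_, ?_⟩
  · rw [hP, Matrix.conjTranspose_mul, Matrix.conjTranspose_mul, Matrix.star_eq_conjTranspose,
      Matrix.conjTranspose_conjTranspose, Matrix.diagonal_conjTranspose]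
    rw [mul_assoc, ← Matrix.star_eq_conjTranspose U]
    rw [show (star ev) = ev by
      funext i; by_cases h : hσ.eigenvalues i = 0 <;> simp [hev, h]]
  · rw [hP]
    calc U * Matrix.diagonal ev * star U * (U * Matrix.diagonal ev * star U)
        = U * (Matrix.diagonal ev * (star U * U) * Matrix.diagonal ev) * star U := by
          noncomm_ring
      _ = U * Matrix.diagonal ev * star U := by
          rw [hUU', mul_one, Matrix.diagonal_mul_diagonal]
          rw [show (fun i => ev i * ev i) = ev by
            funext i; by_cases h : hσ.eigenvalues i = 0 <;> simp [hev, h]]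
  · rw [hP, hspec]
    calc U * Matrix.diagonal ev * star U * (U * D * star U)
        = U * (Matrix.diagonal ev * (star U * U) * D) * star U := by noncomm_ring
      _ = U * D * star U := by rw [hUU', mul_one, hED]
  · intro A hA
    rw [hspec] at hA
    have h1 : A * U * D = 0 := by
      have := congrArg (fun M => M * U) hA
      simpa [mul_assoc, hUU'] using this
    have h2 : A * U * Matrix.diagonal ev = 0 := by
      ext i j
      have h3 := congrFun (congrFun h1 i) j
      simp only [Matrix.mul_diagonal, Matrix.zero_apply, hD] at h3 ⊢
      by_cases h : hσ.eigenvalues j = 0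
      · simp [hev, h]
      · have : ((hσ.eigenvalues j : ℝ) : ℂ) ≠ 0 := by
          simpa using h
        simp [hev, h, (mul_eq_zero.mp h3).resolve_right this]
    rw [hP, ← mul_assoc, ← mul_assoc, h2, Matrix.zero_mul]
  · intro x hx
    rw [hspec] at hx
    have h1 : D *ᵥ (star U *ᵥ x) = 0 := by
      have := congrArg (fun y => star U *ᵥ y) hx
      simpa [Matrix.mulVec_mulVec, ← mul_assoc, hUU', Matrix.mulVec_zero] using this
    have h2 : Matrix.diagonal ev *ᵥ (star U *ᵥ x) = 0 := by
      funext i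
      have h3 := congrFun h1 i
      simp only [Matrix.mulVec_diagonal, Pi.zero_apply, hD] at h3 ⊢
      by_cases h : hσ.eigenvalues i = 0
      · simp [hev, h]
      · have : ((hσ.eigenvalues i : ℝ) : ℂ) ≠ 0 := by simpa using h
        simp [hev, h, (mul_eq_zero.mp h3).resolve_left this]
    rw [hP, ← Matrix.mulVec_mulVec, ← Matrix.mulVec_mulVec, h2, Matrix.mulVec_zero]

lemma key (d : ℕ) (ρ σ : Matrix (Fin (d+1)) (Fin (d+1)) ℂ)
    (hρ : ρ.PosSemidef) (hσ : σ.PosSemidef)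
    (htρ : Matrix.trace ρ = 1) (htσ : Matrix.trace σ = 1)
    (hρσ : ρ * σ = 0)
    (hρperp : ρ *ᵥ perp d = 0) (hσperp : σ *ᵥ perp d = 0) :
    ∃ P : Matrix (Fin (d + 1)) (Fin (d + 1)) ℂ, Pᴴ = P ∧ P * P = P ∧
      (1 / 2) * (Matrix.trace ((P ⊗ₖ P) * (cloneV d * ρ * (cloneV d)ᴴ))).re +
      (1 / 2) * (Matrix.trace (((1 - P) ⊗ₖ (1 - P)) * (cloneV d * σ * (cloneV d)ᴴ))).re =
        1 / 2 + (⨆ i, hρ.1.eigenvalues i) / 16 := by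
  classical
  set L := Fin.last d
  set e := perp d with he
  -- max eigenvalue
  obtain ⟨i₀, hi₀⟩ := Finite.exists_max (hρ.1.eigenvalues)
  have hsup : (⨆ i, hρ.1.eigenvalues i) = hρ.1.eigenvalues i₀ := by
    refine le_antisymm (ciSup_le fun j => hi₀ j) (le_ciSup (Set.Finite.bddAbove (Set.finite_range _)) i₀)
  set lam : ℝ := hρ.1.eigenvalues i₀ with hlam
  -- eigenvalue sum is 1, so lam > 0
  have htrace_sum : ∑ i, ((hρ.1.eigenvalues i : ℝ) : ℂ) = 1 := by
    have h := hρ.1.spectral_theorem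
    have : Matrix.trace ρ = ∑ i, ((hρ.1.eigenvalues i : ℝ) : ℂ) := by
      conv_lhs => rw [h]
      rw [Unitary.conjStarAlgAut_apply, Matrix.trace_mul_comm, ← mul_assoc,
        Matrix.mem_unitaryGroup_iff'.mp (Matrix.IsHermitian.eigenvectorUnitary hρ.1).2, one_mul]
      simp [Matrix.trace_diagonal]
    rw [← this, htρ]
  have hsum_real : ∑ i, hρ.1.eigenvalues i = 1 := by
    have := htrace_sum
    push_cast at this
    exact_mod_cast this
  have hlampos : 0 < lam := by
    by_contra hneg
    push_neg at hneg
    have : (∑ i, hρ.1.eigenvalues i) ≤ 0 := by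
      apply Finset.sum_nonpos
      intro i _
      exact le_trans (hi₀ i) hneg
    linarith [hsum_real]
  -- eigenvector
  set v : Fin (d+1) → ℂ := ⇑(hρ.1.eigenvectorBasis i₀) with hv
  set l : ℂ := ((lam : ℝ) : ℂ) with hldef
  have hl0 : l ≠ 0 := by
    simp [hldef, Complex.ofReal_eq_zero]
    exact ne_of_gt hlampos
  have hρv : ρ *ᵥ v = l • v := by
    have h := hρ.1.mulVec_eigenvectorBasis i₀
    rw [hv, hldef]
    rw [h]
    funext i
    simp [Complex.real_smul]
    exact Or.inl rfl
  have hvv : star v ⬝ᵥ v = 1 := by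
    have h1 : (inner (𝕜 := ℂ) (hρ.1.eigenvectorBasis i₀) (hρ.1.eigenvectorBasis i₀)) = 1 := by
      rw [inner_self_eq_norm_sq_to_K]
      simp [(hρ.1.eigenvectorBasis).orthonormal.1 i₀]
    rw [EuclideanSpace.inner_eq_star_dotProduct] at h1
    rwa [dotProduct_comm] at h1
  -- row L of ρ vanishes
  have hρcol : ∀ j, ρ j L = 0 := by
    intro j
    have := congrFun hρperp j
    simpa [he, perp, Matrix.mulVec, dotProduct, mul_ite, Finset.sum_ite_eq',
      Finset.mem_univ] using this
  have hρrow : ∀ k, ρ L k = 0 := by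
    intro k
    have h := congrFun (congrFun hρ.1 L) k
    rw [Matrix.conjTranspose_apply] at h
    rw [← h, hρcol k, star_zero]
  have hvL : v L = 0 := by
    have h1 : (ρ *ᵥ v) L = 0 := by
      simp [Matrix.mulVec, dotProduct, hρrow]
    rw [hρv] at h1
    simp only [Pi.smul_apply, smul_eq_mul] at h1
    exact (mul_eq_zero.mp h1).resolve_left hl0
  have hσρ : σ * ρ = 0 := by
    have h := congrArg Matrix.conjTranspose hρσ
    rwa [Matrix.conjTranspose_mul, hσ.1, hρ.1, Matrix.conjTranspose_zero] at h
  have hσv : σ *ᵥ v = 0 := by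
    have h1 : σ *ᵥ (ρ *ᵥ v) = 0 := by
      rw [Matrix.mulVec_mulVec, hσρ, Matrix.zero_mulVec]
    rw [hρv, Matrix.mulVec_smul] at h1
    exact (smul_eq_zero.mp h1).resolve_left hl0
  -- constants
  set a : ℂ := ((1/2 : ℝ) : ℂ) with ha
  set b : ℂ := ((Real.sqrt 3 / 2 : ℝ) : ℂ) with hb
  have hb2 : b * b = ((3/4 : ℝ) : ℂ) := by
    rw [hb, ← Complex.ofReal_mul]
    congr 1
    rw [div_mul_div_comm, Real.mul_self_sqrt (by norm_num : (0:ℝ) ≤ 3)]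
    norm_num
  have ha2 : a * a = ((1/4 : ℝ) : ℂ) := by
    rw [ha, ← Complex.ofReal_mul]; norm_num
  have hab : a * a + b * b = 1 := by
    rw [ha2, hb2, ← Complex.ofReal_add]; norm_num
  have hstarb : star b = b := by rw [hb, RCLike.star_def, Complex.conj_ofReal]
  have hstara : star a = a := by rw [ha, RCLike.star_def, Complex.conj_ofReal]
  -- basic dot products
  have hse : star e = e := by
    funext i; simp [he, perp, apply_ite (star : ℂ → ℂ)]
  have hee : e ⬝ᵥ e = 1 := by
    simp [he, perp, dotProduct, ite_mul, Finset.sum_ite_eq', Finset.mem_univ]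
  have hev : e ⬝ᵥ v = 0 := by
    simp [he, perp, dotProduct, ite_mul, Finset.sum_ite_eq', Finset.mem_univ, hvL]
    exact hvL
  have hsve : star v ⬝ᵥ e = 0 := by
    simp [he, perp, dotProduct, mul_ite, Finset.sum_ite_eq', Finset.mem_univ, hvL]
    exact hvL
  -- the vector u
  set u : Fin (d+1) → ℂ := b • e - a • v with hu
  have hsu : star u = b • e - a • star v := by
    rw [hu, star_sub, star_smul, star_smul, hse, hstara, hstarb]
  have hsuu : star u ⬝ᵥ u = 1 := by
    rw [hsu, hu]
    simp only [sub_dotProduct, dotProduct_sub, smul_dotProduct,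
      dotProduct_smul, hee, hev, hsve, hvv, smul_eq_mul]
    linear_combination hab
  have hsue : star u ⬝ᵥ e = b := by
    rw [hsu]
    simp only [sub_dotProduct, smul_dotProduct, hee, hsve, smul_eq_mul]
    ring
  have hsuv : star u ⬝ᵥ v = -a := by
    rw [hsu]
    simp only [sub_dotProduct, smul_dotProduct, hev, hvv, smul_eq_mul]
    ring
  have hρu : ρ *ᵥ u = (-(a*l)) • v := by
    rw [hu, Matrix.mulVec_sub, Matrix.mulVec_smul, Matrix.mulVec_smul, hρperp, hρv]
    funext i; simp; ring
  have hσu : σ *ᵥ u = 0 := by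
    rw [hu, Matrix.mulVec_sub, Matrix.mulVec_smul, Matrix.mulVec_smul, hσperp, hσv]
    simp
  -- support projection of σ
  obtain ⟨S, hSH, hSS, hSσ, hSabs, hSvec⟩ := exists_support_proj σ hσ.1
  have hSe : S *ᵥ e = 0 := hSvec e hσperp
  have hSv : S *ᵥ v = 0 := hSvec v hσv
  have hρS : ρ * S = 0 := hSabs ρ hρσ
  have hSρ : S * ρ = 0 := by
    have h := congrArg Matrix.conjTranspose hρS
    rwa [Matrix.conjTranspose_mul, hSH, hρ.1, Matrix.conjTranspose_zero] at h
  have hSu : S *ᵥ u = 0 := by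
    rw [hu, Matrix.mulVec_sub, Matrix.mulVec_smul, Matrix.mulVec_smul, hSe, hSv]
    simp
  -- the projection
  set Uu : Matrix (Fin (d+1)) (Fin (d+1)) ℂ := Matrix.vecMulVec u (star u) with hUu
  set Q : Matrix (Fin (d+1)) (Fin (d+1)) ℂ := Uu + S with hQ
  set P : Matrix (Fin (d+1)) (Fin (d+1)) ℂ := 1 - Q with hP
  have hsuS : star u ᵥ* S = 0 := by
    have h1 : star (S *ᵥ u) = star u ᵥ* Sᴴ := Matrix.star_mulVec S u
    rw [hSu, star_zero, hSH] at h1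
    exact h1.symm
  have hUuS : Uu * S = 0 := by
    rw [hUu, vmv_mul, hsuS]
    ext i j; simp [Matrix.vecMulVec_apply]
  have hSUu : S * Uu = 0 := by
    rw [hUu, mul_vmv, hSu]
    ext i j; simp [Matrix.vecMulVec_apply]
  have hUuUu : Uu * Uu = Uu := by
    rw [hUu, vmv_mul, vecMul_vmv, hsuu, one_smul]
  have hQH : Qᴴ = Q := by
    rw [hQ, Matrix.conjTranspose_add, hSH, hUu, vmv_conjTranspose]
  have hQQ : Q * Q = Q := by
    rw [hQ, add_mul, mul_add, mul_add, hUuUu, hUuS, hSUu, hSS]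
    simp
  have hPH : Pᴴ = P := by
    rw [hP, Matrix.conjTranspose_sub, hQH, Matrix.conjTranspose_one]
  have hPP : P * P = P := by
    rw [hP]
    have : (1 - Q) * (1 - Q) = 1 - Q - Q + Q * Q := by noncomm_ring
    rw [this, hQQ]; abel
  have h1P : 1 - P = Q := by rw [hP]; abel
  -- entries
  have hentry : ∀ (M : Matrix (Fin (d+1)) (Fin (d+1)) ℂ) (i : Fin (d+1)), (M *ᵥ e) i = M i L := by
    intro M i
    simp [he, perp, Matrix.mulVec, dotProduct, mul_ite, Finset.sum_ite_eq',
      Finset.mem_univ]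
    rfl
  have heL : e L = 1 := by simp [he, perp]; rfl
  have huL : u L = b := by
    rw [hu]; simp [heL, hvL]
  have hsuL : star u L = b := by
    rw [hsu]; simp [heL, hvL]
  have hUuLL : Uu L L = b * b := by
    rw [hUu, Matrix.vecMulVec_apply, huL, hsuL]
  have hSLL : S L L = 0 := by
    rw [← hentry S L, hSe]; rfl
  have hQLL : Q L L = b * b := by
    rw [hQ, Matrix.add_apply, hUuLL, hSLL, add_zero]
  have hPLL : P L L = a * a := by
    rw [hP, Matrix.sub_apply, Matrix.one_apply_eq, hQLL]
    linear_combination -hab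
  -- traces
  have htrUuρ : Matrix.trace (Uu * ρ) = a * a * l := by
    rw [hUu, vmv_mul, trace_vmv, ← Matrix.dotProduct_mulVec, hρu, dotProduct_smul, hsuv]
    simp; ring
  have htrPρ : Matrix.trace (P * ρ) = 1 - a * a * l := by
    rw [hP, hQ, Matrix.sub_mul, Matrix.add_mul, Matrix.one_mul, Matrix.trace_sub,
      Matrix.trace_add, htrUuρ, hSρ, htρ, Matrix.trace_zero]
    ring
  have htrUuσ : Matrix.trace (Uu * σ) = 0 := by
    rw [hUu, vmv_mul, trace_vmv, ← Matrix.dotProduct_mulVec, hσu, dotProduct_zero]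
  have htrQσ : Matrix.trace (Q * σ) = 1 := by
    rw [hQ, Matrix.add_mul, Matrix.trace_add, htrUuσ, hSσ, htσ, zero_add]
  -- mulVec chains
  have hUue : Uu *ᵥ e = b • u := by rw [hUu, vmv_mulVec, hsue]
  have hQe : Q *ᵥ e = b • u := by
    rw [hQ, Matrix.add_mulVec, hUue, hSe, add_zero]
  have hPe : P *ᵥ e = (a*a) • e + (a*b) • v := by
    rw [hP, Matrix.sub_mulVec, Matrix.one_mulVec, hQe, hu]
    funext i
    simp only [Pi.add_apply, Pi.sub_apply, Pi.smul_apply, smul_eq_mul]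
    linear_combination -(e i) * hab
  have hUuv : Uu *ᵥ v = (-a) • u := by rw [hUu, vmv_mulVec, hsuv]
  have hPv : P *ᵥ v = (a*b) • e + (b*b) • v := by
    rw [hP, Matrix.sub_mulVec, Matrix.one_mulVec, hQ, Matrix.add_mulVec, hUuv, hSv, hu]
    funext i
    simp only [Pi.add_apply, Pi.sub_apply, Pi.smul_apply, smul_eq_mul, Pi.zero_apply, add_zero]
    linear_combination -(v i) * hab
  have hρPe : ρ *ᵥ (P *ᵥ e) = (a*b*l) • v := by
    rw [hPe, Matrix.mulVec_add, Matrix.mulVec_smul, Matrix.mulVec_smul, hρperp, hρv]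
    funext i; simp; ring
  have hPρP_LL : (P * ρ * P) L L = a * a * (b*b) * l := by
    rw [← hentry (P*ρ*P) L, ← Matrix.mulVec_mulVec, ← Matrix.mulVec_mulVec, hPe]
    rw [show ρ *ᵥ ((a*a) • e + (a*b) • v) = (a*b*l) • v by
      rw [Matrix.mulVec_add, Matrix.mulVec_smul, Matrix.mulVec_smul, hρperp, hρv]
      funext i; simp; ring]
    rw [Matrix.mulVec_smul, hPv]
    simp only [Pi.smul_apply, Pi.add_apply, smul_eq_mul, heL, hvL]
    ring
  have hQσQ_LL : (Q * σ * Q) L L = 0 := by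
    rw [← hentry (Q*σ*Q) L, ← Matrix.mulVec_mulVec, ← Matrix.mulVec_mulVec, hQe,
      Matrix.mulVec_smul, hσu]
    simp
  -- wrap up
  have hTρ : Matrix.trace ((P ⊗ₖ P) * (cloneV d * ρ * (cloneV d)ᴴ)) = ((1/4 + lam/8 : ℝ) : ℂ) := by
    rw [trace_kron, hPLL, htrPρ, hPρP_LL, ha2, hb2, hldef]
    push_cast; ring
  have hTσ : Matrix.trace ((Q ⊗ₖ Q) * (cloneV d * σ * (cloneV d)ᴴ)) = ((3/4 : ℝ) : ℂ) := by
    rw [trace_kron, hQLL, htrQσ, hQσQ_LL, hb2]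
    push_cast; ring
  refine ⟨P, hPH, hPP, ?_⟩
  rw [h1P, hTρ, hTσ, Complex.ofReal_re, Complex.ofReal_re, hsup]
  ring


/-- Lemma 1 of the paper: for orthogonal density matrices `ρ, σ` supported away from `e_⊥`,
there is a projective measurement `{Π, 1−Π}` whose simultaneous guessing probability for
distinguishing `VρV†` from `VσV†` is at least `1/2 + max(λ_max(ρ), λ_max(σ))/16`. -/
theorem simultaneous_guessing_lower_bound (d : ℕ) (hd : 1 ≤ d)
    (ρ σ : Matrix (Fin (d + 1)) (Fin (d + 1)) ℂ)
    (hρ : ρ.PosSemidef) (hσ : σ.PosSemidef)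
    (htρ : Matrix.trace ρ = 1) (htσ : Matrix.trace σ = 1)
    (hρσ : ρ * σ = 0)
    (hρperp : ρ *ᵥ perp d = 0) (hσperp : σ *ᵥ perp d = 0) :
    ∃ P : Matrix (Fin (d + 1)) (Fin (d + 1)) ℂ, Pᴴ = P ∧ P * P = P ∧
      (1 / 2) * (Matrix.trace ((P ⊗ₖ P) * (cloneV d * ρ * (cloneV d)ᴴ))).re +
      (1 / 2) * (Matrix.trace (((1 - P) ⊗ₖ (1 - P)) * (cloneV d * σ * (cloneV d)ᴴ))).re ≥
        1 / 2 + max (⨆ i, hρ.1.eigenvalues i) (⨆ i, hσ.1.eigenvalues i) / 16 := by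
  rcases le_total (⨆ i, hσ.1.eigenvalues i) (⨆ i, hρ.1.eigenvalues i) with hle | hle
  · obtain ⟨P, h1, h2, h3⟩ := key d ρ σ hρ hσ htρ htσ hρσ hρperp hσperp
    refine ⟨P, h1, h2, ?_⟩
    rw [max_eq_left hle]
    exact h3.ge
  · have hσρ : σ * ρ = 0 := by
      have h := congrArg Matrix.conjTranspose hρσ
      rwa [Matrix.conjTranspose_mul, hσ.1, hρ.1, Matrix.conjTranspose_zero] at h
    obtain ⟨P', h1, h2, h3⟩ := key d σ ρ hσ hρ htσ htρ hσρ hσperp hρperp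
    refine ⟨1 - P', ?_, ?_, ?_⟩
    · rw [Matrix.conjTranspose_sub, Matrix.conjTranspose_one, h1]
    · have h4 : (1 - P') * (1 - P') = 1 - P' - P' + P' * P' := by noncomm_ring
      rw [h4, h2]; abel
    · rw [max_eq_right hle, sub_sub_cancel]
      linarith [h3]
end

section
/- Let (Ω, 𝒫) be a probability space, let d ≥ 1, M ≥ 1, and let a, b : Fin d → Ω → ℝ be random variables such that the combined family of 2d random variables (a_0,…,a_{d−1},b_0,…,b_{d−1}) is mutually independent and each has the standard Gaussian distribution N(0,1) (i.e., its law is gaussianReal 0 1). Let S : Fin M → Finset (Fin d) be a partition of Fin d into M pairwise disjoint nonempty sets whose union is all of Fin d. Then 𝔼[ max_{m ∈ Fin M} ( Σ_{i ∈ S m} (a_i² + b_i²) ) / ( Σ_{i ∈ Fin d} (a_i² + b_i²) ) ] ≥ ((1/2 − e⁻¹)/2) · ln M / d, where the maximum is over the M values of the ratio, ln is the natural logarithm, and e⁻¹ = exp(−1). -/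
open MeasureTheory ProbabilityTheory

open Real Set
open scoped ENNReal NNReal

lemma radial_integral (s : ℝ) :
    ∫ r in Ioi s, r * Real.exp (-r ^ 2 / 2) = Real.exp (-s ^ 2 / 2) := by
  have hderiv : ∀ x ∈ Ioi s, HasDerivAt (fun r : ℝ => -Real.exp (-r ^ 2 / 2))
      (x * Real.exp (-x ^ 2 / 2)) x := by
    intro x _
    have h1 : HasDerivAt (fun r : ℝ => -r ^ 2 / 2) (-x) x := by
      have := ((hasDerivAt_pow 2 x).neg).div_const 2
      exact this.congr_deriv (by ring)
    have h2 := (h1.exp).neg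
    exact h2.congr_deriv (by ring)
  have hint : IntegrableOn (fun r : ℝ => r * Real.exp (-r ^ 2 / 2)) (Ioi s) := by
    have := integrable_mul_exp_neg_mul_sq (b := (1/2 : ℝ)) (by norm_num)
    have h := this.restrict (s := Ioi s)
    refine h.congr ?_
    filter_upwards with x
    ring_nf
  have htends : Filter.Tendsto (fun r : ℝ => -Real.exp (-r ^ 2 / 2)) Filter.atTop (nhds 0) := by
    rw [show (0:ℝ) = -0 by ring]
    refine Filter.Tendsto.neg ?_
    refine Real.tendsto_exp_atBot.comp ?_
    have h : Filter.Tendsto (fun r : ℝ => r ^ 2 / 2) Filter.atTop Filter.atTop :=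
      (Filter.tendsto_pow_atTop (by norm_num)).atTop_div_const (by norm_num)
    have := Filter.tendsto_neg_atTop_atBot.comp h
    refine this.congr ?_
    intro x; simp [Function.comp]; ring
  have hcont : ContinuousWithinAt (fun r : ℝ => -Real.exp (-r ^ 2 / 2)) (Ici s) s := (Continuous.continuousWithinAt (by fun_prop))
  have := MeasureTheory.integral_Ioi_of_hasDerivAt_of_tendsto hcont hderiv hint htends
  rw [this]; ring


lemma gaussianPDFReal_zero_one (x : ℝ) :
    gaussianPDFReal 0 1 x = (Real.sqrt (2 * π))⁻¹ * Real.exp (-x ^ 2 / 2) := by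
  simp [gaussianPDFReal, neg_div]

lemma integral_sq_exp_real : ∫ x : ℝ, x ^ 2 * Real.exp (-x ^ 2 / 2) = Real.sqrt (2 * π) := by
  have habs : ∀ x : ℝ, |x| ^ 2 * Real.exp (-|x| ^ 2 / 2) = x ^ 2 * Real.exp (-x ^ 2 / 2) := by
    intro x; rw [sq_abs]
  have h1 : ∫ x : ℝ, x ^ 2 * Real.exp (-x ^ 2 / 2)
      = 2 * ∫ x in Ioi (0:ℝ), x ^ 2 * Real.exp (-x ^ 2 / 2) := by
    rw [← integral_comp_abs (f := fun x => x ^ 2 * Real.exp (-x ^ 2 / 2))]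
    exact integral_congr_ae (Filter.Eventually.of_forall fun x => (habs x).symm)
  have h2 : ∫ x in Ioi (0:ℝ), x ^ 2 * Real.exp (-x ^ 2 / 2)
      = ((1:ℝ)/2) ^ (-(((2:ℝ) + 1)) / 2) * (1 / 2) * Real.Gamma (((2:ℝ) + 1) / 2) := by
    rw [← integral_rpow_mul_exp_neg_mul_rpow (p := 2) (q := 2) (b := 1/2) (by norm_num)
      (by norm_num) (by norm_num)]
    refine setIntegral_congr_fun measurableSet_Ioi (fun x hx => ?_)
    rw [show ((2:ℝ)) = ((2:ℕ):ℝ) by norm_num, Real.rpow_natCast]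
    push_cast
    ring_nf
  have hgamma : Real.Gamma (((2:ℝ) + 1) / 2) = Real.sqrt π / 2 := by
    have : ((2:ℝ) + 1) / 2 = 1/2 + 1 := by norm_num
    rw [this, Real.Gamma_add_one (by norm_num), Real.Gamma_one_half_eq]
    ring
  have hpow : ((1:ℝ)/2) ^ (-(((2:ℝ) + 1)) / 2) = 2 * Real.sqrt 2 := by
    rw [show (-(((2:ℝ) + 1)) / 2) = -(3/2) by norm_num, Real.rpow_neg (by norm_num),
      one_div, Real.inv_rpow (by norm_num), inv_inv,
      show (3:ℝ)/2 = 1 + 1/2 by norm_num, Real.rpow_add (by norm_num),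
      Real.rpow_one, ← Real.sqrt_eq_rpow]
  rw [h1, h2, hgamma, hpow]
  rw [Real.sqrt_mul (by norm_num)]
  ring

lemma gaussianPDFReal_zero_one' (x : ℝ) :
    gaussianPDFReal 0 1 x = (Real.sqrt (2 * π))⁻¹ * Real.exp (-x ^ 2 / 2) := by
  simp [gaussianPDFReal, neg_div]

lemma gaussianReal_eq_withDensity :
    gaussianReal 0 1
      = MeasureTheory.Measure.withDensity volume
        (fun x => (Real.toNNReal (gaussianPDFReal 0 1 x) : ℝ≥0∞)) := by
  rw [gaussianReal_of_var_ne_zero 0 one_ne_zero]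
  rfl

lemma meas_toNNReal_pdf : Measurable (fun x => Real.toNNReal (gaussianPDFReal 0 1 x)) :=
  (measurable_gaussianPDFReal 0 1).real_toNNReal

lemma integral_gaussianReal_eq (g : ℝ → ℝ) :
    ∫ x, g x ∂(gaussianReal 0 1) = ∫ x, gaussianPDFReal 0 1 x * g x := by
  rw [gaussianReal_eq_withDensity, integral_withDensity_eq_integral_smul meas_toNNReal_pdf g]
  refine integral_congr_ae (Filter.Eventually.of_forall fun x => ?_)
  simp only [NNReal.smul_def, Real.coe_toNNReal _ (gaussianPDFReal_nonneg 0 1 x), smul_eq_mul]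

lemma integral_sq_gaussianReal : ∫ x, x ^ 2 ∂(gaussianReal 0 1) = 1 := by
  rw [integral_gaussianReal_eq]
  have : ∀ x : ℝ, gaussianPDFReal 0 1 x * x ^ 2
      = (Real.sqrt (2 * π))⁻¹ * (x ^ 2 * Real.exp (-x ^ 2 / 2)) := by
    intro x; rw [gaussianPDFReal_zero_one']; ring
  rw [integral_congr_ae (Filter.Eventually.of_forall this), integral_const_mul,
    integral_sq_exp_real, inv_mul_cancel₀]
  positivity

lemma integrable_sq_gaussianReal : Integrable (fun x : ℝ => x ^ 2) (gaussianReal 0 1) := by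
  rw [gaussianReal_eq_withDensity]
  rw [integrable_withDensity_iff (meas_toNNReal_pdf.coe_nnreal_ennreal)
    (Filter.Eventually.of_forall fun x => ENNReal.coe_lt_top)]
  have key : Integrable (fun x : ℝ => x ^ (2:ℝ) * Real.exp (-(1/2) * x ^ 2)) volume :=
    integrable_rpow_mul_exp_neg_mul_sq (by norm_num) (by norm_num)
  refine ((key.const_mul ((Real.sqrt (2 * π))⁻¹)).congr ?_)
  refine Filter.Eventually.of_forall fun x => ?_
  have hx : ((Real.toNNReal (gaussianPDFReal 0 1 x) : ℝ≥0∞)).toReal = gaussianPDFReal 0 1 x := by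
    rw [ENNReal.coe_toReal, Real.coe_toNNReal _ (gaussianPDFReal_nonneg 0 1 x)]
  simp only [hx]
  rw [gaussianPDFReal_zero_one', show ((2:ℝ)) = ((2:ℕ):ℝ) by norm_num, Real.rpow_natCast]
  push_cast
  ring_nf


lemma iIndepFun_congr' {Ω : Type} [MeasurableSpace Ω] {Pr : Measure Ω}
    {ι : Type} [Fintype ι] {f g : ι → Ω → ℝ}
    (h : iIndepFun f Pr)
    (heq : ∀ i, f i =ᵐ[Pr] g i) :
    iIndepFun g Pr := by
  rw [iIndepFun_iff_measure_inter_preimage_eq_mul] at h ⊢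
  intro s sets hmeas
  have hall : ∀ᵐ ω ∂Pr, ∀ i, f i ω = g i ω := ae_all_iff.mpr heq
  have h1 : Pr (⋂ i ∈ s, g i ⁻¹' sets i) = Pr (⋂ i ∈ s, f i ⁻¹' sets i) := by
    refine measure_congr ?_
    rw [Filter.eventuallyEq_set]
    filter_upwards [hall] with ω hω
    simp only [Set.mem_iInter, Set.mem_preimage]
    exact ⟨fun H i hi => by rw [hω i]; exact H i hi, fun H i hi => by rw [← hω i]; exact H i hi⟩
  rw [h1, h s hmeas]
  refine Finset.prod_congr rfl fun i _ => ?_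
  refine measure_congr ?_
  rw [Filter.eventuallyEq_set]
  filter_upwards [hall] with ω hω
  simp [Set.mem_preimage, hω i]


lemma indep_prod_blocks {Ω : Type} [MeasurableSpace Ω] {Pr : Measure Ω} [IsProbabilityMeasure Pr]
    {d M : ℕ} {f : Fin d ⊕ Fin d → Ω → ℝ} (hm : ∀ j, Measurable (f j))
    (hindep : iIndepFun f Pr)
    (idx : Fin M → Fin d) (hinj : Function.Injective idx) (t : ℝ) :
    Pr (⋂ m, {ω | (f (Sum.inl (idx m)) ω) ^ 2 + (f (Sum.inr (idx m)) ω) ^ 2 < t})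
      = ∏ m, Pr {ω | (f (Sum.inl (idx m)) ω) ^ 2 + (f (Sum.inr (idx m)) ω) ^ 2 < t} := by
  classical
  set E : Fin M → Set Ω :=
    fun m => {ω | (f (Sum.inl (idx m)) ω) ^ 2 + (f (Sum.inr (idx m)) ω) ^ 2 < t} with hE
  set J : Finset (Fin M) → Finset (Fin d ⊕ Fin d) :=
    fun s => s.biUnion fun m => {Sum.inl (idx m), Sum.inr (idx m)} with hJ
  have hJ1 : ∀ {m : Fin M} {s : Finset (Fin M)}, m ∈ s → Sum.inl (idx m) ∈ J s := by
    intro m s hms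
    simp only [hJ, Finset.mem_biUnion]
    exact ⟨m, hms, by simp⟩
  have hJ2 : ∀ {m : Fin M} {s : Finset (Fin M)}, m ∈ s → Sum.inr (idx m) ∈ J s := by
    intro m s hms
    simp only [hJ, Finset.mem_biUnion]
    exact ⟨m, hms, by simp⟩
  have key : ∀ s : Finset (Fin M), Pr (⋂ m ∈ s, E m) = ∏ m ∈ s, Pr (E m) := by
    intro s
    induction s using Finset.induction_on with
    | empty => simp
    | @insert m₀ s hm₀ ih =>
      -- the tuple maps
      set g₁ : Ω → ((j : (J {m₀} : Finset (Fin d ⊕ Fin d))) → ℝ) := fun ω j => f j ω with hg₁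
      set g₂ : Ω → ((j : (J s : Finset (Fin d ⊕ Fin d))) → ℝ) := fun ω j => f j ω with hg₂
      have hdisjJ : Disjoint (J {m₀}) (J s) := by
        rw [Finset.disjoint_left]
        intro j hj1 hj2
        simp only [hJ, Finset.mem_biUnion, Finset.mem_singleton, Finset.mem_insert] at hj1 hj2
        obtain ⟨m₁, hm₁, hjm₁⟩ := hj1
        obtain ⟨m₂, hm₂, hjm₂⟩ := hj2
        rw [hm₁] at hjm₁
        have : m₀ = m₂ := by
          rcases hjm₁ with h1 | h1 <;> rcases hjm₂ with h2 | h2 <;>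
            (rw [h1] at h2; first
              | exact hinj (Sum.inl.inj h2)
              | exact hinj (Sum.inr.inj h2)
              | exact absurd h2 (by simp))
        exact hm₀ (this ▸ hm₂)
      have hIF := hindep.indepFun_finset (J {m₀}) (J s) hdisjJ hm
      -- the sets
      set B₁ : Set ((j : (J {m₀} : Finset (Fin d ⊕ Fin d))) → ℝ) :=
        ⋂ m, ⋂ (hms : m ∈ ({m₀} : Finset (Fin M))),
          {v | (v ⟨Sum.inl (idx m), hJ1 hms⟩) ^ 2 + (v ⟨Sum.inr (idx m), hJ2 hms⟩) ^ 2 < t}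
        with hB₁
      set B₂ : Set ((j : (J s : Finset (Fin d ⊕ Fin d))) → ℝ) :=
        ⋂ m, ⋂ (hms : m ∈ s),
          {v | (v ⟨Sum.inl (idx m), hJ1 hms⟩) ^ 2 + (v ⟨Sum.inr (idx m), hJ2 hms⟩) ^ 2 < t}
        with hB₂
      have hBmeas : ∀ {σ : Finset (Fin M)}
          (B : Set ((j : (J σ : Finset (Fin d ⊕ Fin d))) → ℝ)),
          (B = ⋂ m, ⋂ (hms : m ∈ σ),
            {v | (v ⟨Sum.inl (idx m), hJ1 hms⟩) ^ 2 + (v ⟨Sum.inr (idx m), hJ2 hms⟩) ^ 2 < t}) →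
          MeasurableSet B := by
        rintro σ B rfl
        refine MeasurableSet.iInter fun m => MeasurableSet.iInter fun hms => ?_
        exact measurableSet_lt
          (((measurable_pi_apply (⟨Sum.inl (idx m), hJ1 hms⟩ :
              (J σ : Finset (Fin d ⊕ Fin d)))).pow_const 2).add
            ((measurable_pi_apply (⟨Sum.inr (idx m), hJ2 hms⟩ :
              (J σ : Finset (Fin d ⊕ Fin d)))).pow_const 2))
          measurable_const
      have hpre : ∀ (σ : Finset (Fin M)) (B : Set ((j : (J σ : Finset (Fin d ⊕ Fin d))) → ℝ)),
          (B = ⋂ m, ⋂ (hms : m ∈ σ),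
            {v | (v ⟨Sum.inl (idx m), hJ1 hms⟩) ^ 2 + (v ⟨Sum.inr (idx m), hJ2 hms⟩) ^ 2 < t}) →
          (fun ω (j : (J σ : Finset (Fin d ⊕ Fin d))) => f j ω) ⁻¹' B = ⋂ m ∈ σ, E m := by
        rintro σ B rfl
        ext ω
        simp only [Set.mem_preimage, Set.mem_iInter, Set.mem_setOf_eq, hE]
      have hinter := hIF.meas_inter (s := g₁ ⁻¹' B₁) (t := g₂ ⁻¹' B₂)
        ⟨B₁, hBmeas B₁ hB₁, rfl⟩ ⟨B₂, hBmeas B₂ hB₂, rfl⟩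
      have e₁ : g₁ ⁻¹' B₁ = E m₀ := by
        rw [hpre {m₀} B₁ hB₁]
        simp
      have e₂ : g₂ ⁻¹' B₂ = ⋂ m ∈ s, E m := hpre s B₂ hB₂
      rw [Finset.set_biInter_insert, Finset.prod_insert hm₀, ← ih, ← e₁, ← e₂]
      exact hinter
  have h1 : (⋂ m, E m) = ⋂ m ∈ Finset.univ, E m := by simp
  rw [h1, key Finset.univ]


lemma gaussian_prod_eq :
    (gaussianReal 0 1).prod (gaussianReal 0 1)
      = (volume.prod (volume : Measure ℝ)).withDensity
          (fun p : ℝ × ℝ => ENNReal.ofReal (gaussianPDFReal 0 1 p.1)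
            * ENNReal.ofReal (gaussianPDFReal 0 1 p.2)) := by
  refine Measure.prod_eq (fun s t hs ht => ?_)
  rw [withDensity_apply _ (hs.prod ht), ← Measure.prod_restrict,
    lintegral_prod_mul (f := fun x => ENNReal.ofReal (gaussianPDFReal 0 1 x))
      (g := fun x => ENNReal.ofReal (gaussianPDFReal 0 1 x))
      (measurable_gaussianPDFReal 0 1).ennreal_ofReal.aemeasurable
      (measurable_gaussianPDFReal 0 1).ennreal_ofReal.aemeasurable]
  rw [gaussianReal_of_var_ne_zero 0 one_ne_zero, withDensity_apply _ hs, withDensity_apply _ ht]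
  rfl

lemma meas_tail_set (t : ℝ) : MeasurableSet {p : ℝ × ℝ | t ≤ p.1 ^ 2 + p.2 ^ 2} := by
  have : Continuous fun p : ℝ × ℝ => p.1 ^ 2 + p.2 ^ 2 := by fun_prop
  exact measurableSet_le measurable_const this.measurable

lemma gaussian_tail2 {t : ℝ} (ht : 0 < t) :
    ((gaussianReal 0 1).prod (gaussianReal 0 1)) {p : ℝ × ℝ | t ≤ p.1 ^ 2 + p.2 ^ 2}
      = ENNReal.ofReal (Real.exp (-t / 2)) := by
  classical
  set c : ℝ := (Real.sqrt (2 * π))⁻¹ with hc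
  have hcpos : 0 < c := by positivity
  set F : ℝ × ℝ → ℝ := fun p => gaussianPDFReal 0 1 p.1 * gaussianPDFReal 0 1 p.2 with hF
  have hFnn : ∀ p, 0 ≤ F p := fun p =>
    mul_nonneg (gaussianPDFReal_nonneg 0 1 _) (gaussianPDFReal_nonneg 0 1 _)
  have hFint : Integrable F ((volume : Measure ℝ).prod volume) :=
    (integrable_gaussianPDFReal 0 1).mul_prod (integrable_gaussianPDFReal 0 1)
  have hmeas := meas_tail_set t
  -- reduce to a real integral
  have step1 : ((gaussianReal 0 1).prod (gaussianReal 0 1)) {p : ℝ × ℝ | t ≤ p.1 ^ 2 + p.2 ^ 2}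
      = ENNReal.ofReal (∫ p in {p : ℝ × ℝ | t ≤ p.1 ^ 2 + p.2 ^ 2}, F p
          ∂((volume : Measure ℝ).prod volume)) := by
    rw [gaussian_prod_eq, withDensity_apply _ hmeas]
    rw [ofReal_integral_eq_lintegral_ofReal (hFint.restrict)
      (Filter.Eventually.of_forall hFnn)]
    refine lintegral_congr fun p => ?_
    rw [ENNReal.ofReal_mul (gaussianPDFReal_nonneg 0 1 _)]
  rw [step1]
  congr 1
  -- polar coordinates
  have step2 : ∫ p in {p : ℝ × ℝ | t ≤ p.1 ^ 2 + p.2 ^ 2}, F p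
        ∂((volume : Measure ℝ).prod volume)
      = ∫ p : ℝ × ℝ, Set.indicator {p : ℝ × ℝ | t ≤ p.1 ^ 2 + p.2 ^ 2} F p := by
    rw [integral_indicator hmeas]
    rfl
  rw [step2, ← integral_comp_polarCoord_symm]
  have hval : ∀ p ∈ polarCoord.target,
      p.1 • Set.indicator {p : ℝ × ℝ | t ≤ p.1 ^ 2 + p.2 ^ 2} F (polarCoord.symm p)
      = (Set.indicator {r : ℝ | t ≤ r ^ 2} (fun r => r * (c * c * Real.exp (-r ^ 2 / 2))) p.1)
          * (1 : ℝ) := by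
    rintro ⟨r, θ⟩ _
    have hsq : (r * Real.cos θ) ^ 2 + (r * Real.sin θ) ^ 2 = r ^ 2 := by
      rw [mul_pow, mul_pow, ← mul_add, add_comm]
      rw [sin_sq_add_cos_sq, mul_one]
    have hsymm : polarCoord.symm (r, θ) = (r * Real.cos θ, r * Real.sin θ) := rfl
    rw [hsymm, mul_one]
    by_cases hmem : t ≤ r ^ 2
    · rw [Set.indicator_of_mem (by simpa [hsq] using hmem),
        Set.indicator_of_mem (by exact hmem)]
      simp only [F, gaussianPDFReal_zero_one']
      rw [smul_eq_mul]
      have hexp : Real.exp (-(r * Real.cos θ) ^ 2 / 2) * Real.exp (-(r * Real.sin θ) ^ 2 / 2)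
          = Real.exp (-r ^ 2 / 2) := by
        rw [← Real.exp_add]
        congr 1
        rw [← hsq]
        ring
      calc r * ((√(2 * π))⁻¹ * Real.exp (-(r * Real.cos θ) ^ 2 / 2)
            * ((√(2 * π))⁻¹ * Real.exp (-(r * Real.sin θ) ^ 2 / 2)))
          = r * ((√(2 * π))⁻¹ * (√(2 * π))⁻¹ * (Real.exp (-(r * Real.cos θ) ^ 2 / 2)
            * Real.exp (-(r * Real.sin θ) ^ 2 / 2))) := by ring
        _ = r * (c * c * Real.exp (-r ^ 2 / 2)) := by rw [hexp]
    · rw [Set.indicator_of_notMem (by simpa [hsq] using hmem),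
        Set.indicator_of_notMem (by exact hmem)]
      simp
  rw [setIntegral_congr_fun polarCoord.open_target.measurableSet hval]
  have htarget : polarCoord.target = Ioi (0:ℝ) ×ˢ Ioo (-π) π := rfl
  rw [htarget, Measure.volume_eq_prod ℝ ℝ, ← Measure.prod_restrict,
    integral_prod_mul (f := fun r : ℝ =>
      Set.indicator {r : ℝ | t ≤ r ^ 2} (fun r => r * (c * c * Real.exp (-r ^ 2 / 2))) r)
      (g := fun _ : ℝ => (1:ℝ))]
  have hθ : ∫ _ in Ioo (-π) π, (1:ℝ) = 2 * π := by
    simp [Real.volume_Ioo]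
    rw [max_eq_left (by linarith [pi_pos])]
    ring
  have hr : ∫ r in Ioi (0:ℝ),
      Set.indicator {r : ℝ | t ≤ r ^ 2} (fun r => r * (c * c * Real.exp (-r ^ 2 / 2))) r
      = c * c * Real.exp (-t / 2) := by
    have hA : MeasurableSet {r : ℝ | t ≤ r ^ 2} :=
      measurableSet_le measurable_const (by fun_prop)
    rw [setIntegral_indicator hA]
    have hset : Ioi (0:ℝ) ∩ {r : ℝ | t ≤ r ^ 2} = Ici (Real.sqrt t) := by
      ext r
      simp only [mem_inter_iff, mem_Ioi, mem_setOf_eq, mem_Ici]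
      constructor
      · rintro ⟨hr0, hrt⟩
        calc Real.sqrt t ≤ Real.sqrt (r ^ 2) := Real.sqrt_le_sqrt hrt
        _ = r := by rw [Real.sqrt_sq hr0.le]
      · intro h
        have h0 : 0 < r := lt_of_lt_of_le (Real.sqrt_pos.mpr ht) h
        refine ⟨h0, ?_⟩
        calc t = Real.sqrt t ^ 2 := (Real.sq_sqrt ht.le).symm
        _ ≤ r ^ 2 := by
          have := Real.sqrt_nonneg t
          nlinarith
    rw [hset, integral_Ici_eq_integral_Ioi]
    have : ∀ r : ℝ, r * (c * c * Real.exp (-r ^ 2 / 2))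
        = (c * c) * (r * Real.exp (-r ^ 2 / 2)) := fun r => by ring
    rw [integral_congr_ae (Filter.Eventually.of_forall fun r => this r)]
    rw [integral_const_mul, radial_integral, Real.sq_sqrt ht.le]
  rw [hr, hθ]
  have hcc : c * c * (2 * π) = 1 := by
    rw [hc, ← mul_inv, Real.mul_self_sqrt (by positivity)]
    exact inv_mul_cancel₀ (by positivity)
  calc c * c * Real.exp (-t / 2) * (2 * π) = (c * c * (2 * π)) * Real.exp (-t/2) := by ring
  _ = Real.exp (-t/2) := by rw [hcc, one_mul]


/-- The key probabilistic estimate behind Theorem 3 of the paper: for `2d` i.i.d. standard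
Gaussians `a_0,…,a_{d−1},b_0,…,b_{d−1}` and a partition `S` of `Fin d` into `M` nonempty blocks,
`𝔼[ max_m (Σ_{i ∈ S m} (a_i² + b_i²)) / (Σ_i (a_i² + b_i²)) ] ≥ ((1/2 − e⁻¹)/2)·ln M / d`. -/
theorem expected_max_block_ratio_gaussian
    {Ω : Type} [MeasurableSpace Ω] (Pr : Measure Ω) [IsProbabilityMeasure Pr]
    (d M : ℕ) (hd : 1 ≤ d) (hM : 1 ≤ M)
    (a b : Fin d → Ω → ℝ)
    (hindep : iIndepFun
      (Sum.elim a b) Pr)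
    (hlaw : ∀ i : Fin d ⊕ Fin d, Measure.map (Sum.elim a b i) Pr = gaussianReal 0 1)
    (S : Fin M → Finset (Fin d))
    (hdisj : ∀ m m' : Fin M, m ≠ m' → Disjoint (S m) (S m'))
    (hne : ∀ m, (S m).Nonempty)
    (hcover : Finset.univ.biUnion S = (Finset.univ : Finset (Fin d))) :
    (∫ ω, (⨆ m : Fin M,
        (∑ i ∈ S m, ((a i ω) ^ 2 + (b i ω) ^ 2)) /
          (∑ i : Fin d, ((a i ω) ^ 2 + (b i ω) ^ 2))) ∂Pr) ≥
      ((1 / 2 - Real.exp (-1)) / 2) * Real.log M / (d : ℝ) := by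
  classical
  haveI : Nonempty (Fin M) := ⟨⟨0, hM⟩⟩
  have hd0 : (0:ℝ) < d := by exact_mod_cast hd
  -- measurable modifications
  have haem : ∀ j : Fin d ⊕ Fin d, AEMeasurable (Sum.elim a b j) Pr := by
    intro j
    by_contra h
    have h0 := Measure.map_of_not_aemeasurable h
    rw [hlaw j] at h0
    exact (IsProbabilityMeasure.ne_zero (gaussianReal 0 1)) h0
  set f : Fin d ⊕ Fin d → Ω → ℝ := fun j => (haem j).mk _ with hf
  have hfm : ∀ j, Measurable (f j) := fun j => (haem j).measurable_mk
  have hfae : ∀ j, Sum.elim a b j =ᵐ[Pr] f j := fun j => (haem j).ae_eq_mk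
  have hindep' : iIndepFun f Pr :=
    iIndepFun_congr' hindep hfae
  have hlaw' : ∀ j, Measure.map (f j) Pr = gaussianReal 0 1 := fun j => by
    rw [← Measure.map_congr (hfae j)]; exact hlaw j
  set Z : Fin d → Ω → ℝ := fun i ω => f (Sum.inl i) ω ^ 2 + f (Sum.inr i) ω ^ 2 with hZ
  set T : Ω → ℝ := fun ω => ∑ i, Z i ω with hT
  have hZm : ∀ i, Measurable (Z i) := fun i => ((hfm _).pow_const 2).add ((hfm _).pow_const 2)
  have hTm : Measurable T := Finset.measurable_sum _ fun i _ => hZm i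
  have hZnn : ∀ i ω, 0 ≤ Z i ω := fun i ω => by positivity
  have hTnn : ∀ ω, 0 ≤ T ω := fun ω => Finset.sum_nonneg fun i _ => hZnn i ω
  -- integrability and expectation
  have hsq_int : ∀ j, Integrable (fun ω => f j ω ^ 2) Pr := by
    intro j
    have h1 : Integrable (fun x : ℝ => x ^ 2) (Measure.map (f j) Pr) := by
      rw [hlaw' j]; exact integrable_sq_gaussianReal
    rw [integrable_map_measure (by fun_prop) (hfm j).aemeasurable] at h1
    exact h1
  have hsq_exp : ∀ j, ∫ ω, f j ω ^ 2 ∂Pr = 1 := by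
    intro j
    have h1 : ∫ x, (x:ℝ) ^ 2 ∂(Measure.map (f j) Pr) = 1 := by
      rw [hlaw' j]; exact integral_sq_gaussianReal
    rwa [integral_map (hfm j).aemeasurable (by fun_prop)] at h1
  have hZint : ∀ i, Integrable (Z i) Pr := fun i =>
    (hsq_int (Sum.inl i)).add (hsq_int (Sum.inr i))
  have hTint : Integrable T Pr := integrable_finset_sum _ fun i _ => hZint i
  have hTexp : ∫ ω, T ω ∂Pr = 2 * d := by
    rw [hT]
    rw [integral_finset_sum _ fun i _ => hZint i]
    have hZe : ∀ i : Fin d, ∫ ω, Z i ω ∂Pr = 2 := by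
      intro i
      rw [hZ]
      rw [integral_add (hsq_int _) (hsq_int _), hsq_exp, hsq_exp]
      norm_num
    rw [Finset.sum_congr rfl fun i _ => hZe i]
    simp [Finset.card_univ]
    ring
  -- Markov
  have hmarkov : (Pr {ω | (4 * d : ℝ) ≤ T ω}).toReal ≤ 1 / 2 := by
    have h1 := mul_meas_ge_le_integral_of_nonneg
      (Filter.Eventually.of_forall hTnn) hTint (4 * d)
    rw [hTexp, measureReal_def] at h1
    nlinarith [ENNReal.toReal_nonneg (a := Pr {ω | (4 * (d:ℝ)) ≤ T ω})]
  -- the sup is nonneg pointwise (with original a b)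
  have hFnn0 : ∀ ω, 0 ≤ ⨆ m : Fin M,
      (∑ i ∈ S m, ((a i ω) ^ 2 + (b i ω) ^ 2)) / (∑ i : Fin d, ((a i ω) ^ 2 + (b i ω) ^ 2)) :=
    fun ω => Real.iSup_nonneg fun m => div_nonneg
      (Finset.sum_nonneg fun i _ => by positivity) (Finset.sum_nonneg fun i _ => by positivity)
  -- split on M = 1
  rcases eq_or_lt_of_le hM with hM1 | hM2
  · subst hM1
    rw [ge_iff_le, show ((1:ℕ):ℝ) = 1 by norm_num, Real.log_one, mul_zero, zero_div]
    exact integral_nonneg hFnn0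
  -- now M ≥ 2
  have hM1R : (1:ℝ) < M := by exact_mod_cast hM2
  set t : ℝ := 2 * Real.log M with ht
  have htpos : 0 < t := by
    have := Real.log_pos hM1R
    positivity
  set idx : Fin M → Fin d := fun m => (hne m).choose with hidx'
  have hidx : ∀ m, idx m ∈ S m := fun m => (hne m).choose_spec
  have hinj : Function.Injective idx := by
    intro m m' h
    by_contra hne'
    exact Finset.disjoint_left.mp (hdisj m m' hne') (hidx m) (h ▸ hidx m')
  -- tail probabilities
  have htail : ∀ m, Pr {ω | t ≤ Z (idx m) ω} = ENNReal.ofReal (1 / M) := by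
    intro m
    have hij : (Sum.inl (idx m) : Fin d ⊕ Fin d) ≠ Sum.inr (idx m) := by simp
    have hIF : IndepFun (f (Sum.inl (idx m))) (f (Sum.inr (idx m))) Pr :=
      hindep'.indepFun hij
    have hmap := (indepFun_iff_map_prod_eq_prod_map_map
      (hfm (Sum.inl (idx m))).aemeasurable (hfm (Sum.inr (idx m))).aemeasurable).mp hIF
    rw [hlaw', hlaw'] at hmap
    have hpair : Measurable fun ω => (f (Sum.inl (idx m)) ω, f (Sum.inr (idx m)) ω) :=
      (hfm _).prodMk (hfm _)
    have hset : {ω | t ≤ Z (idx m) ω}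
        = (fun ω => (f (Sum.inl (idx m)) ω, f (Sum.inr (idx m)) ω))
            ⁻¹' {p : ℝ × ℝ | t ≤ p.1 ^ 2 + p.2 ^ 2} := rfl
    rw [hset, ← Measure.map_apply hpair (meas_tail_set t), hmap, gaussian_tail2 htpos]
    congr 1
    rw [show -t / 2 = -Real.log M by rw [ht]; ring]
    rw [Real.exp_neg, Real.exp_log (by positivity : (0:ℝ) < M), one_div]
  set Em : Fin M → Set Ω := fun m => {ω | Z (idx m) ω < t} with hEm
  have hEmmeas : ∀ m, MeasurableSet (Em m) := fun m => measurableSet_lt (hZm _) measurable_const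
  have hEmval : ∀ m, Pr (Em m) = 1 - ENNReal.ofReal (1 / M) := by
    intro m
    have hcompl : Em m = {ω | t ≤ Z (idx m) ω}ᶜ := by
      ext ω; simp [hEm, not_le]
    rw [hcompl, measure_compl (measurableSet_le measurable_const (hZm _)) (measure_ne_top _ _),
      htail m, measure_univ]
  have hprod := indep_prod_blocks hfm hindep' idx hinj t
  have hcap : Pr (⋂ m, Em m) ≤ ENNReal.ofReal (Real.exp (-1)) := by
    have hsame : (⋂ m, Em m)
        = ⋂ m, {ω | (f (Sum.inl (idx m)) ω) ^ 2 + (f (Sum.inr (idx m)) ω) ^ 2 < t} := rfl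
    rw [hsame, hprod]
    have hsame2 : ∀ m : Fin M,
        Pr {ω | (f (Sum.inl (idx m)) ω) ^ 2 + (f (Sum.inr (idx m)) ω) ^ 2 < t}
          = 1 - ENNReal.ofReal (1 / M) := fun m => hEmval m
    rw [Finset.prod_congr rfl fun m _ => hsame2 m, Finset.prod_const, Finset.card_univ,
      Fintype.card_fin]
    have h1M1 : (1:ℝ) / M ≤ 1 := by
      rw [div_le_one (by positivity : (0:ℝ) < M)]
      exact hM1R.le
    have h1M0 : (0:ℝ) ≤ 1 - 1 / M := by linarith
    have hsub : (1:ℝ≥0∞) - ENNReal.ofReal (1 / M) = ENNReal.ofReal (1 - 1 / M) := by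
      rw [ENNReal.ofReal_sub _ (by positivity : (0:ℝ) ≤ 1 / M), ENNReal.ofReal_one]
    rw [hsub, ← ENNReal.ofReal_pow h1M0]
    refine ENNReal.ofReal_le_ofReal ?_
    have hle : (1:ℝ) - 1 / M ≤ Real.exp (-(1 / M)) := by
      linarith [Real.add_one_le_exp (-(1 / M))]
    calc ((1:ℝ) - 1 / M) ^ M ≤ Real.exp (-(1 / M)) ^ M := pow_le_pow_left₀ h1M0 hle M
    _ = Real.exp (-(1 / M) * M) := by rw [← Real.exp_nat_mul]; ring_nf
    _ = Real.exp (-1) := by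
      congr 1
      field_simp
  -- the good event
  set Bev : Set Ω := {ω | T ω < 4 * d} with hBev
  have hBmeas : MeasurableSet Bev := measurableSet_lt hTm measurable_const
  have hBlb : 1 - ENNReal.ofReal (1 / 2) ≤ Pr Bev := by
    have hcompl : Bev = {ω | (4 * d : ℝ) ≤ T ω}ᶜ := by
      ext ω; simp [hBev, not_le]
    rw [hcompl, measure_compl (measurableSet_le measurable_const hTm) (measure_ne_top _ _),
      measure_univ]
    refine tsub_le_tsub_left ?_ 1
    exact (ENNReal.le_ofReal_iff_toReal_le (measure_ne_top _ _) (by norm_num)).mpr hmarkov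
  set G : Set Ω := Bev \ (⋂ m, Em m) with hG
  have hGmeas : MeasurableSet G := hBmeas.diff (MeasurableSet.iInter hEmmeas)
  have hGlb : ENNReal.ofReal (1 / 2 - Real.exp (-1)) ≤ Pr G := by
    have h1 : Pr Bev - Pr (⋂ m, Em m) ≤ Pr G := le_measure_diff
    refine le_trans ?_ h1
    have h2 : ENNReal.ofReal (1 / 2 - Real.exp (-1))
        = ENNReal.ofReal (1 / 2) - ENNReal.ofReal (Real.exp (-1)) :=
      ENNReal.ofReal_sub _ (Real.exp_nonneg _)
    rw [h2]
    refine tsub_le_tsub ?_ hcap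
    refine le_trans ?_ hBlb
    have : (1:ℝ≥0∞) - ENNReal.ofReal (1 / 2) = ENNReal.ofReal (1 - 1 / 2) := by
      rw [ENNReal.ofReal_sub _ (by norm_num : (0:ℝ) ≤ 1 / 2), ENNReal.ofReal_one]
    rw [this]
    exact ENNReal.ofReal_le_ofReal (by norm_num)
  have hGreal : 1 / 2 - Real.exp (-1) ≤ (Pr G).toReal :=
    (ENNReal.ofReal_le_iff_le_toReal (measure_ne_top _ _)).mp hGlb
  -- the sup with primed variables
  set c : ℝ := t / (4 * d) with hc
  have hcnn : 0 ≤ c := div_nonneg htpos.le (by positivity)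
  set F : Ω → ℝ := fun ω => ⨆ m : Fin M, (∑ i ∈ S m, Z i ω) / T ω with hF
  have hFm : Measurable F :=
    Measurable.iSup fun m => (Finset.measurable_sum _ fun i _ => hZm i).div hTm
  have hFnn : ∀ ω, 0 ≤ F ω := fun ω =>
    Real.iSup_nonneg fun m => div_nonneg (Finset.sum_nonneg fun i _ => hZnn i ω) (hTnn ω)
  have hFle1 : ∀ ω, F ω ≤ 1 := by
    intro ω
    refine ciSup_le fun m => ?_
    by_cases hT0 : T ω = 0
    · rw [hT0, div_zero]; norm_num
    · rw [div_le_one (lt_of_le_of_ne (hTnn ω) (Ne.symm hT0))]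
      exact Finset.sum_le_sum_of_subset_of_nonneg (Finset.subset_univ _)
        (fun i _ _ => hZnn i ω)
  have hFint : Integrable F Pr := by
    refine Integrable.mono' (integrable_const (1:ℝ)) hFm.aestronglyMeasurable ?_
    refine Filter.Eventually.of_forall fun ω => ?_
    rw [Real.norm_eq_abs, abs_of_nonneg (hFnn ω)]
    exact hFle1 ω
  have hpoint : ∀ ω, Set.indicator G (fun _ => c) ω ≤ F ω := by
    intro ω
    by_cases hω : ω ∈ G
    · rw [Set.indicator_of_mem hω]
      obtain ⟨hB, hnot⟩ := hω
      obtain ⟨m, hm⟩ : ∃ m, t ≤ Z (idx m) ω := by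
        by_contra hcon
        push_neg at hcon
        exact hnot (Set.mem_iInter.mpr fun m => hcon m)
      have hTub : T ω < 4 * d := hB
      have hTlb : t ≤ T ω :=
        le_trans hm (Finset.single_le_sum (fun i _ => hZnn i ω) (Finset.mem_univ (idx m)))
      have hTpos : 0 < T ω := lt_of_lt_of_le htpos hTlb
      have hnum : t ≤ ∑ i ∈ S m, Z i ω :=
        le_trans hm (Finset.single_le_sum (fun i _ => hZnn i ω) (hidx m))
      have hstep : c ≤ (∑ i ∈ S m, Z i ω) / T ω := by
        rw [hc]
        exact div_le_div₀ (le_trans htpos.le hnum) hnum hTpos hTub.le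
      exact le_trans hstep (le_ciSup (f := fun m : Fin M => (∑ i ∈ S m, Z i ω) / T ω)
        (Set.Finite.bddAbove (Set.finite_range _)) m)
    · rw [Set.indicator_of_notMem hω]
      exact hFnn ω
  -- rewrite LHS
  have hlhs : (∫ ω, (⨆ m : Fin M,
        (∑ i ∈ S m, ((a i ω) ^ 2 + (b i ω) ^ 2)) /
          (∑ i : Fin d, ((a i ω) ^ 2 + (b i ω) ^ 2))) ∂Pr) = ∫ ω, F ω ∂Pr := by
    refine integral_congr_ae ?_
    have hall : ∀ᵐ ω ∂Pr, ∀ j, Sum.elim a b j ω = f j ω := ae_all_iff.mpr hfae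
    filter_upwards [hall] with ω hω
    have ha' : ∀ i, a i ω = f (Sum.inl i) ω := fun i => hω (Sum.inl i)
    have hb' : ∀ i, b i ω = f (Sum.inr i) ω := fun i => hω (Sum.inr i)
    simp only [hF, hZ, hT, ha', hb']
  rw [ge_iff_le, hlhs]
  have hind : ∫ ω, Set.indicator G (fun _ => c) ω ∂Pr = (Pr G).toReal * c := by
    rw [integral_indicator_const _ hGmeas]
    simp [mul_comm, measureReal_def]
  have hmain : c * (1 / 2 - Real.exp (-1)) ≤ ∫ ω, F ω ∂Pr := by
    calc c * (1 / 2 - Real.exp (-1)) ≤ c * (Pr G).toReal :=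
          mul_le_mul_of_nonneg_left hGreal hcnn
    _ = (Pr G).toReal * c := mul_comm _ _
    _ = ∫ ω, Set.indicator G (fun _ => c) ω ∂Pr := hind.symm
    _ ≤ ∫ ω, F ω ∂Pr :=
          integral_mono ((integrable_const c).indicator hGmeas) hFint hpoint
  refine le_trans (le_of_eq ?_) hmain
  rw [hc, ht]
  field_simp
  ring
end

section
/- Let (Ω, 𝒫) be a probability space, n ≥ 1, λ > 0, and let k : Fin n → ℕ with k i ≥ 1 for all i. Let X : Fin n → Ω → ℝ be mutually independent random variables such that X i has the Gamma distribution with shape k i and rate λ (i.e., the law of X i is gammaMeasure (k i) λ, the Erlang(k i, λ) distribution). Then 𝔼[ (max_{i ∈ Fin n} X_i) / (Σ_{i ∈ Fin n} X_i) ] ≥ ((1/2 − e⁻¹)/2) · ln n / (Σ_{i ∈ Fin n} k i), where ln is the natural logarithm and e⁻¹ = exp(−1). (Note (1/2 − e⁻¹)/2 > 0.0457/log₂ e, so the right-hand side is at least 0.0457·log₂ n / Σ_i k i.) -/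
open MeasureTheory ProbabilityTheory
open MeasureTheory Real Set Filter Topology ProbabilityTheory
open scoped ENNReal NNReal

section ErlangAux

lemma myIntegrableOn (c : ℕ) {r t : ℝ} (hr : 0 < r) (ht : 0 ≤ t) :
    IntegrableOn (fun x : ℝ => x ^ c * Real.exp (-(r * x))) (Ioi t) := by
  have h := integrableOn_rpow_mul_exp_neg_mul_rpow (p := 1) (s := (c : ℝ)) (b := r)
    (lt_of_lt_of_le (by norm_num) (Nat.cast_nonneg c)) one_pos hr
  have h2 : IntegrableOn (fun x : ℝ => x ^ c * Real.exp (-(r * x))) (Ioi 0) := by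
    refine h.congr_fun (fun x hx => ?_) measurableSet_Ioi
    simp only [Real.rpow_one, Real.rpow_natCast, neg_mul]
  exact h2.mono_set (Ioi_subset_Ioi ht)

lemma myTendsto (c : ℕ) {r : ℝ} (hr : 0 < r) :
    Tendsto (fun x : ℝ => x ^ c * Real.exp (-(r * x))) atTop (𝓝 0) := by
  have h := (tendsto_pow_mul_exp_neg_atTop_nhds_zero c).comp
    (tendsto_id.const_mul_atTop hr (f := fun x : ℝ => x))
  have h2 := h.div_const (r ^ c)
  rw [zero_div] at h2
  refine h2.congr fun x => ?_
  simp only [Function.comp_apply, id_eq]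
  rw [mul_pow]
  field_simp

lemma myIntegrableOn' (c : ℕ) {r : ℝ} (hr : 0 < r) (t : ℝ) :
    IntegrableOn (fun x : ℝ => x ^ c * Real.exp (-(r * x))) (Ioi t) := by
  rcases le_or_gt 0 t with h | h
  · exact myIntegrableOn c hr h
  · have hc : Continuous (fun x : ℝ => x ^ c * Real.exp (-(r * x))) :=
      (continuous_pow c).mul (Real.continuous_exp.comp (continuous_const.mul continuous_id).neg)
    have h1 : IntegrableOn (fun x : ℝ => x ^ c * Real.exp (-(r * x))) (Ioc t 0) :=
      hc.integrableOn_Ioc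
    have := h1.union (myIntegrableOn c hr le_rfl)
    rwa [Ioc_union_Ioi_eq_Ioi h.le] at this

lemma myBase {r : ℝ} (t : ℝ) (hr : 0 < r) :
    ∫ x in Ioi t, Real.exp (-(r * x)) = Real.exp (-(r * t)) / r := by
  have hderiv : ∀ x ∈ Ici t, HasDerivAt (fun x => -Real.exp (-(r * x)) / r)
      (Real.exp (-(r * x))) x := by
    intro x _
    have h1 : HasDerivAt (fun x : ℝ => -(r * x)) (-r) x := by
      have := ((hasDerivAt_id x).const_mul r).neg; simp only [mul_one] at this; exact this
    have h2 := (h1.exp).neg.div_const r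
    refine h2.congr_deriv ?_
    field_simp
  have hint : IntegrableOn (fun x => Real.exp (-(r * x))) (Ioi t) := by
    simpa using myIntegrableOn' 0 hr t
  have htend : Tendsto (fun x => -Real.exp (-(r * x)) / r) atTop (𝓝 0) := by
    have h := myTendsto 0 hr
    simp only [pow_zero, one_mul] at h
    simpa using (h.neg.div_const r)
  have := integral_Ioi_of_hasDerivAt_of_tendsto' hderiv hint htend
  rw [this]; ring

lemma myIBP (c : ℕ) {r : ℝ} (t : ℝ) (hr : 0 < r) :
    ∫ x in Ioi t, x ^ (c+1) * Real.exp (-(r * x)) =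
      t ^ (c+1) * Real.exp (-(r * t)) / r +
        ((c+1 : ℝ) / r) * ∫ x in Ioi t, x ^ c * Real.exp (-(r * x)) := by
  set f : ℝ → ℝ := fun x => -(x ^ (c+1) * Real.exp (-(r * x))) / r with hf
  set g : ℝ → ℝ := fun x => x ^ (c+1) * Real.exp (-(r * x))
      - ((c+1 : ℝ) / r) * (x ^ c * Real.exp (-(r * x))) with hg
  have hderiv : ∀ x ∈ Ici t, HasDerivAt f (g x) x := by
    intro x _
    have h1 : HasDerivAt (fun x : ℝ => -(r * x)) (-r) x := by
      have := ((hasDerivAt_id x).const_mul r).neg; simp only [mul_one] at this; exact this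
    have h2 : HasDerivAt (fun x : ℝ => x ^ (c+1)) ((c+1 : ℝ) * x ^ c) x := by
      simpa using hasDerivAt_pow (c+1) x
    have h3 := ((h2.mul h1.exp).neg.div_const r)
    refine h3.congr_deriv ?_
    rw [hg]
    field_simp
    ring
  have hint : IntegrableOn g (Ioi t) :=
    (myIntegrableOn' (c+1) hr t).sub ((myIntegrableOn' c hr t).const_mul _)
  have htend : Tendsto f atTop (𝓝 0) := by
    simpa using ((myTendsto (c+1) hr).neg.div_const r)
  have key := integral_Ioi_of_hasDerivAt_of_tendsto' hderiv hint htend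
  rw [hg] at key
  rw [integral_sub (myIntegrableOn' (c+1) hr t) ((myIntegrableOn' c hr t).const_mul _),
    integral_const_mul] at key
  have : f t = -(t ^ (c+1) * Real.exp (-(r * t))) / r := rfl
  rw [this] at key
  linear_combination key

lemma myTail (c : ℕ) {r : ℝ} {t : ℝ} (hr : 0 < r) (ht : 0 ≤ t) :
    (c.factorial : ℝ) / r ^ (c+1) * Real.exp (-(r * t)) ≤
      ∫ x in Ioi t, x ^ c * Real.exp (-(r * x)) := by
  induction c with
  | zero => simp [myBase t hr]; exact le_of_eq (by ring)
  | succ c ih =>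
    rw [myIBP c t hr]
    have h1 : 0 ≤ t ^ (c+1) * Real.exp (-(r * t)) / r := by positivity
    have h2 : ((c+1 : ℝ) / r) * ((c.factorial : ℝ) / r ^ (c+1) * Real.exp (-(r * t)))
        ≤ ((c+1 : ℝ) / r) * ∫ x in Ioi t, x ^ c * Real.exp (-(r * x)) := by
      apply mul_le_mul_of_nonneg_left ih (by positivity)
    calc ((c+1).factorial : ℝ) / r ^ (c+1+1) * Real.exp (-(r * t))
        = ((c+1 : ℝ) / r) * ((c.factorial : ℝ) / r ^ (c+1) * Real.exp (-(r * t))) := by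
          rw [Nat.factorial_succ]; push_cast; field_simp; ring
      _ ≤ ((c+1 : ℝ) / r) * ∫ x in Ioi t, x ^ c * Real.exp (-(r * x)) := h2
      _ ≤ _ := by linarith

lemma gamma_tail {k : ℕ} (hk : 1 ≤ k) {r t : ℝ} (hr : 0 < r) (ht : 0 ≤ t) :
    ENNReal.ofReal (Real.exp (-(r * t))) ≤ gammaMeasure (k : ℝ) r (Ici t) := by
  obtain ⟨c, rfl⟩ : ∃ c, k = c + 1 := ⟨k - 1, (Nat.succ_pred_eq_of_pos hk).symm⟩
  set C : ℝ := r ^ (c+1) / (c.factorial : ℝ) with hC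
  have hCpos : 0 < C := by positivity
  have hGamma : Real.Gamma ((c+1 : ℕ) : ℝ) = (c.factorial : ℝ) := by
    push_cast
    exact Real.Gamma_nat_eq_factorial c
  have hpdf : ∀ x ∈ Ioi t, gammaPDF ((c+1 : ℕ) : ℝ) r x =
      ENNReal.ofReal (C * (x ^ c * Real.exp (-(r * x)))) := by
    intro x hx
    have hx0 : (0:ℝ) ≤ x := le_trans ht (le_of_lt hx)
    rw [gammaPDF_of_nonneg hx0, hGamma]
    congr 1
    have h1 : ((c+1 : ℕ) : ℝ) - 1 = (c : ℕ) := by push_cast; ring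
    rw [h1, Real.rpow_natCast, Real.rpow_natCast]
    ring
  have key : gammaMeasure ((c+1 : ℕ) : ℝ) r (Ici t) ≥
      ∫⁻ x in Ioi t, ENNReal.ofReal (C * (x ^ c * Real.exp (-(r * x)))) := by
    rw [gammaMeasure, withDensity_apply _ measurableSet_Ici]
    refine le_trans (le_of_eq ?_) (lintegral_mono_set Ioi_subset_Ici_self)
    exact (setLIntegral_congr_fun measurableSet_Ioi hpdf).symm
  have hint : IntegrableOn (fun x : ℝ => C * (x ^ c * Real.exp (-(r * x)))) (Ioi t) :=
    (myIntegrableOn' c hr t).const_mul C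
  have hnn : (fun _ : ℝ => (0:ℝ)) ≤ᵐ[volume.restrict (Ioi t)] fun x : ℝ => C * (x ^ c * Real.exp (-(r * x))) := by
    filter_upwards [ae_restrict_mem measurableSet_Ioi] with x hx
    have hx0 : (0:ℝ) ≤ x := le_trans ht (le_of_lt hx)
    positivity
  have heq := ofReal_integral_eq_lintegral_ofReal hint hnn
  refine le_trans ?_ key
  rw [← heq]
  apply ENNReal.ofReal_le_ofReal
  rw [integral_const_mul]
  calc Real.exp (-(r * t)) = C * ((c.factorial : ℝ) / r ^ (c+1) * Real.exp (-(r * t))) := by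
        rw [hC]; field_simp
    _ ≤ C * ∫ x in Ioi t, x ^ c * Real.exp (-(r * x)) :=
        mul_le_mul_of_nonneg_left (myTail c hr ht) hCpos.le

lemma gamma_mean {a r : ℝ} (ha : 0 < a) (hr : 0 < r) :
    ∫⁻ x, ENNReal.ofReal x ∂(gammaMeasure a r) = ENNReal.ofReal (a / r) := by
  have hpdfmeas : Measurable (gammaPDF a r) :=
    ENNReal.measurable_ofReal.comp (measurable_gammaPDFReal a r)
  rw [gammaMeasure, lintegral_withDensity_eq_lintegral_mul _ hpdfmeas ENNReal.measurable_ofReal]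
  have hae : ∀ᵐ x : ℝ, x ≠ 0 := by
    rw [ae_iff]
    have : {x : ℝ | ¬ x ≠ 0} = {0} := by ext x; simp
    rw [this, Real.volume_singleton]
  have hcong : ∀ᵐ x : ℝ, (gammaPDF a r * ENNReal.ofReal) x =
      ENNReal.ofReal (a / r) * gammaPDF (a+1) r x := by
    filter_upwards [hae] with x hx
    rcases lt_or_gt_of_ne hx with hneg | hpos
    · simp [Pi.mul_apply, gammaPDF_of_neg hneg, ENNReal.ofReal_of_nonpos hneg.le]
    · have hx0 : (0:ℝ) ≤ x := hpos.le
      rw [Pi.mul_apply, gammaPDF_of_nonneg hx0, gammaPDF_of_nonneg hx0,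
        ← ENNReal.ofReal_mul (by positivity), ← ENNReal.ofReal_mul (by positivity)]
      congr 1
      rw [Real.Gamma_add_one ha.ne', Real.rpow_add_one hr.ne']
      have h1 : x ^ (a - 1) * x = x ^ a := by
        rw [← Real.rpow_add_one hpos.ne']; ring_nf
      have h2 : x ^ (a + 1 - 1) = x ^ a := by norm_num
      rw [h2]
      field_simp
      rw [← h1]
  have hm : Measurable (gammaPDF (a+1) r) :=
    ENNReal.measurable_ofReal.comp (measurable_gammaPDFReal (a+1) r)
  rw [lintegral_congr_ae hcong, lintegral_const_mul _ hm,
    lintegral_gammaPDF_eq_one (by linarith) hr, mul_one]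

lemma gamma_Iic_zero {a r : ℝ} (ha : 0 < a) (hr : 0 < r) :
    gammaMeasure a r (Iic 0) = 0 := by
  have h1 : gammaMeasure a r (Iio 0) = 0 := by
    rw [gammaMeasure, withDensity_apply _ measurableSet_Iio]
    exact lintegral_gammaPDF_of_nonpos le_rfl
  have h2 : gammaMeasure a r ({0} : Set ℝ) = 0 := by
    rw [gammaMeasure, withDensity_apply _ (measurableSet_singleton 0)]
    exact setLIntegral_measure_zero _ _ Real.volume_singleton
  have : gammaMeasure a r (Iic 0) ≤ gammaMeasure a r (Iio 0) + gammaMeasure a r {0} := by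
    rw [← Iio_union_right]
    exact measure_union_le _ _
  simp [h1, h2] at this
  exact this


end ErlangAux


/-- Lemma on the Erlang distribution (Lemma 2 / Appendix B of the paper): for independent
`X_i ∼ Erlang(k_i, λ)`, `𝔼[(max_i X_i)/(Σ_i X_i)] ≥ ((1/2 − e⁻¹)/2)·ln n / (Σ_i k_i)`. -/
theorem expected_max_over_sum_erlang
    {Ω : Type} [MeasurableSpace Ω] (Pr : Measure Ω) [IsProbabilityMeasure Pr]
    (n : ℕ) (hn : 1 ≤ n) (lam : ℝ) (hlam : 0 < lam)
    (k : Fin n → ℕ) (hk : ∀ i, 1 ≤ k i)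
    (X : Fin n → Ω → ℝ)
    (hindep : iIndepFun X Pr)
    (hlaw : ∀ i, Measure.map (X i) Pr = gammaMeasure (k i : ℝ) lam) :
    (∫ ω, (⨆ i : Fin n, X i ω) / (∑ i : Fin n, X i ω) ∂Pr) ≥
      ((1 / 2 - Real.exp (-1)) / 2) * Real.log n / (∑ i : Fin n, (k i : ℝ)) := by
  haveI : Nonempty (Fin n) := Fin.pos_iff_nonempty.mp hn
  have hkpos : ∀ i, (0:ℝ) < (k i : ℝ) := fun i => by exact_mod_cast hk i
  have hPM : ∀ i, IsProbabilityMeasure (gammaMeasure (k i : ℝ) lam) :=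
    fun i => isProbabilityMeasure_gammaMeasure (hkpos i) hlam
  have hXae : ∀ i, AEMeasurable (X i) Pr := by
    intro i
    by_contra h
    have h0 := hlaw i
    rw [Measure.map_of_not_aemeasurable h] at h0
    have h1 := (hPM i).measure_univ
    rw [← h0] at h1
    simp at h1
  set Y : Fin n → Ω → ℝ := fun i => (hXae i).mk (X i) with hYdef
  have hYmeas : ∀ i, Measurable (Y i) := fun i => (hXae i).measurable_mk
  have hXY : ∀ i, X i =ᵐ[Pr] Y i := fun i => (hXae i).ae_eq_mk
  have hXYall : ∀ᵐ ω ∂Pr, ∀ i, X i ω = Y i ω := ae_all_iff.mpr hXY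
  have hlawY : ∀ i, Measure.map (Y i) Pr = gammaMeasure (k i : ℝ) lam := fun i => by
    rw [← Measure.map_congr (hXY i)]; exact hlaw i
  set M : Ω → ℝ := fun ω => ⨆ i, Y i ω with hMdef
  set S : Ω → ℝ := fun ω => ∑ i, Y i ω with hSdef
  have hMeq : ∀ ω, M ω = Finset.univ.sup' Finset.univ_nonempty (fun i => Y i ω) :=
    fun ω => (Finset.sup'_univ_eq_ciSup _).symm
  have hM : Measurable M := by
    have : M = Finset.univ.sup' Finset.univ_nonempty (fun i => Y i) := by
      funext ω; rw [hMeq ω, Finset.sup'_apply]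
    rw [this]
    exact Finset.measurable_sup' _ (fun i _ => hYmeas i)
  have hS : Measurable S := Finset.measurable_sum _ (fun i _ => hYmeas i)
  -- a.e. positivity
  have hpos_i : ∀ i, ∀ᵐ ω ∂Pr, 0 < Y i ω := by
    intro i
    have h0 : Pr (Y i ⁻¹' Iic 0) = 0 := by
      rw [← Measure.map_apply (hYmeas i) measurableSet_Iic, hlawY i]
      exact gamma_Iic_zero (hkpos i) hlam
    rw [ae_iff]
    convert h0 using 2
    ext ω
    simp [not_lt]
  have hpos : ∀ᵐ ω ∂Pr, ∀ i, 0 < Y i ω := ae_all_iff.mpr hpos_i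
  -- constants
  set K : ℝ := ∑ i, (k i : ℝ) with hKdef
  have hKn : (n:ℝ) ≤ K := by
    have : (n:ℝ) = ∑ _i : Fin n, (1:ℝ) := by simp
    rw [this]
    exact Finset.sum_le_sum fun i _ => by exact_mod_cast hk i
  have hnpos : (0:ℝ) < n := by exact_mod_cast hn
  have hKpos : (0:ℝ) < K := lt_of_lt_of_le hnpos hKn
  set av : ℝ := Real.log n / lam with havdef
  set tv : ℝ := 2 * K / lam with htvdef
  have hlogn : 0 ≤ Real.log n := Real.log_nonneg (by exact_mod_cast hn)
  have hav0 : 0 ≤ av := div_nonneg hlogn hlam.le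
  have htv0 : 0 < tv := by positivity
  have hexp_av : Real.exp (-(lam * av)) = 1/(n:ℝ) := by
    rw [havdef, mul_div_cancel₀ _ hlam.ne', Real.exp_neg, Real.exp_log hnpos, one_div]
  have h1n : (0:ℝ) ≤ 1 - 1/(n:ℝ) := by
    have : 1/(n:ℝ) ≤ 1 := by
      rw [div_le_one hnpos]; exact_mod_cast hn
    linarith
  -- per-coordinate small tail
  have hIio : ∀ i, Pr (X i ⁻¹' Iio av) ≤ ENNReal.ofReal (1 - 1/(n:ℝ)) := by
    intro i
    rw [← Measure.map_apply_of_aemeasurable (hXae i) measurableSet_Iio, hlaw i]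
    haveI := hPM i
    have htail := gamma_tail (hk i) hlam hav0
    have hc : gammaMeasure ((k i : ℕ) : ℝ) lam (Iio av) =
        1 - gammaMeasure ((k i : ℕ) : ℝ) lam (Ici av) := by
      rw [← compl_Ici, prob_compl_eq_one_sub measurableSet_Ici]
    rw [hc]
    calc 1 - gammaMeasure ((k i : ℕ) : ℝ) lam (Ici av)
        ≤ 1 - ENNReal.ofReal (Real.exp (-(lam * av))) := tsub_le_tsub_left htail 1
      _ = ENNReal.ofReal (1 - 1/(n:ℝ)) := by
          rw [hexp_av, ← ENNReal.ofReal_one, ← ENNReal.ofReal_sub _ (by positivity)]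
  -- max tail
  have hMevent : Pr {ω | M ω < av} ≤ ENNReal.ofReal (Real.exp (-1)) := by
    have hset : {ω | M ω < av} =ᵐ[Pr] ⋂ i, X i ⁻¹' Iio av := by
      rw [Filter.eventuallyEq_set]
      filter_upwards [hXYall] with ω hω
      simp only [mem_setOf_eq, mem_iInter, mem_preimage, mem_Iio]
      rw [hMeq ω, Finset.sup'_lt_iff]
      constructor
      · intro h i; rw [hω i]; exact h i (Finset.mem_univ i)
      · intro h i _; rw [← hω i]; exact h i
    rw [measure_congr hset]
    have hprod := (iIndepFun_iff_measure_inter_preimage_eq_mul.mp hindep) Finset.univ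
      (sets := fun _ => Iio av) (fun i _ => measurableSet_Iio)
    have hU : (⋂ i, X i ⁻¹' Iio av) = ⋂ i ∈ Finset.univ, X i ⁻¹' (fun _ => Iio av) i := by
      simp
    rw [hU, hprod]
    have hpow : (1 - 1/(n:ℝ))^n ≤ Real.exp (-1) := by
      have h1 : 1 - 1/(n:ℝ) ≤ Real.exp (-(1/(n:ℝ))) := by
        have := Real.add_one_le_exp (-(1/(n:ℝ)))
        linarith
      calc (1 - 1/(n:ℝ))^n ≤ (Real.exp (-(1/(n:ℝ))))^n := pow_le_pow_left₀ h1n h1 n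
        _ = Real.exp (-1) := by
            rw [← Real.exp_nat_mul]
            congr 1
            field_simp
    calc ∏ i, Pr (X i ⁻¹' Iio av) ≤ ∏ _i : Fin n, ENNReal.ofReal (1 - 1/(n:ℝ)) :=
          Finset.prod_le_prod' (fun i _ => hIio i)
      _ = ENNReal.ofReal (1 - 1/(n:ℝ)) ^ n := by
          rw [Finset.prod_const, Finset.card_univ, Fintype.card_fin]
      _ = ENNReal.ofReal ((1 - 1/(n:ℝ)) ^ n) := (ENNReal.ofReal_pow h1n _).symm
      _ ≤ ENNReal.ofReal (Real.exp (-1)) := ENNReal.ofReal_le_ofReal hpow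
  -- mean of S
  have hmean : ∫⁻ ω, ENNReal.ofReal (S ω) ∂Pr = ENNReal.ofReal (K / lam) := by
    have h1 : ∀ᵐ ω ∂Pr, ENNReal.ofReal (S ω) = ∑ i, ENNReal.ofReal (Y i ω) := by
      filter_upwards [hpos] with ω hω
      exact ENNReal.ofReal_sum_of_nonneg (fun i _ => (hω i).le)
    have h2 : ∀ i : Fin n, ∫⁻ ω, ENNReal.ofReal (Y i ω) ∂Pr =
        ENNReal.ofReal ((k i : ℝ)/lam) := by
      intro i
      rw [← lintegral_map ENNReal.measurable_ofReal (hYmeas i), hlawY i,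
        gamma_mean (hkpos i) hlam]
    have hmeasof : ∀ i : Fin n, Measurable (fun ω => ENNReal.ofReal (Y i ω)) :=
      fun i => ENNReal.measurable_ofReal.comp (hYmeas i)
    rw [lintegral_congr_ae h1, lintegral_finset_sum _ (fun i _ => hmeasof i)]
    rw [Finset.sum_congr rfl (fun i _ => h2 i),
      ← ENNReal.ofReal_sum_of_nonneg (fun i _ => by positivity)]
    congr 1
    rw [hKdef, Finset.sum_div]
  -- Markov
  have hSevent : Pr {ω | tv < S ω} ≤ ENNReal.ofReal (1/2) := by
    have hsub : {ω | tv < S ω} ⊆ {ω | ENNReal.ofReal tv ≤ ENNReal.ofReal (S ω)} :=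
      fun ω hω => ENNReal.ofReal_le_ofReal (le_of_lt hω)
    have h3 := mul_meas_ge_le_lintegral₀ (μ := Pr)
      (ENNReal.measurable_ofReal.comp hS).aemeasurable (ENNReal.ofReal tv)
    have h4 : ENNReal.ofReal tv * Pr {ω | tv < S ω} ≤ ENNReal.ofReal (K/lam) :=
      le_trans (mul_le_mul_right (measure_mono hsub) _) (le_trans h3 (le_of_eq hmean))
    have h5 : ENNReal.ofReal (K/lam) = ENNReal.ofReal tv * ENNReal.ofReal (1/2) := by
      rw [← ENNReal.ofReal_mul htv0.le]
      congr 1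
      rw [htvdef]
      field_simp
    rw [h5] at h4
    exact (ENNReal.mul_le_mul_iff_right (by simp [htv0]) ENNReal.ofReal_ne_top).mp h4
  -- the good event
  set A : Set Ω := {ω | av ≤ M ω} ∩ {ω | S ω ≤ tv} with hAdef
  have hAmeas : MeasurableSet A :=
    (measurableSet_le measurable_const hM).inter (measurableSet_le hS measurable_const)
  have hAc : Pr Aᶜ ≤ ENNReal.ofReal (Real.exp (-1) + 1/2) := by
    have hcompl : Aᶜ = {ω | M ω < av} ∪ {ω | tv < S ω} := by
      rw [hAdef, Set.compl_inter]
      congr 1 <;> ext ω <;> simp [not_le]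
    rw [hcompl, ENNReal.ofReal_add (by positivity) (by norm_num)]
    exact le_trans (measure_union_le _ _) (add_le_add hMevent hSevent)
  have hexp_half : Real.exp (-1) < 1/2 := by
    have h2 : (2:ℝ) < Real.exp 1 := lt_trans (by norm_num) Real.exp_one_gt_d9
    rw [Real.exp_neg]
    rw [show (1:ℝ)/2 = 2⁻¹ by norm_num]
    exact inv_strictAnti₀ (by norm_num) h2
  have hAge : ENNReal.ofReal (1/2 - Real.exp (-1)) ≤ Pr A := by
    have h1 : Pr Aᶜ = 1 - Pr A := prob_compl_eq_one_sub hAmeas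
    have h2 : (1:ℝ≥0∞) - ENNReal.ofReal (Real.exp (-1) + 1/2) ≤ Pr A := by
      rw [h1] at hAc
      have := tsub_le_iff_left.mp hAc
      exact tsub_le_iff_right.mpr this
    refine le_trans (le_of_eq ?_) h2
    rw [← ENNReal.ofReal_one, ← ENNReal.ofReal_sub _ (by positivity)]
    congr 1
    ring
  have hAtoReal : 1/2 - Real.exp (-1) ≤ (Pr A).toReal := by
    have h := ENNReal.toReal_mono (measure_ne_top _ _) hAge
    rwa [ENNReal.toReal_ofReal (by linarith)] at h
  -- integral bound
  have hSpos : ∀ᵐ ω ∂Pr, 0 < S ω := by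
    filter_upwards [hpos] with ω hω
    exact Finset.sum_pos (fun i _ => hω i) Finset.univ_nonempty
  have hMle : ∀ᵐ ω ∂Pr, M ω ≤ S ω ∧ 0 ≤ M ω := by
    filter_upwards [hpos] with ω hω
    constructor
    · rw [hMeq ω]
      exact Finset.sup'_le _ _ fun i _ =>
        Finset.single_le_sum (fun j _ => (hω j).le) (Finset.mem_univ i)
    · rw [hMeq ω]
      exact le_trans (hω (Classical.arbitrary _)).le
        (Finset.le_sup' (fun i => Y i ω) (Finset.mem_univ (Classical.arbitrary _)))
  have hbound : ∀ᵐ ω ∂Pr, ‖M ω / S ω‖ ≤ 1 := by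
    filter_upwards [hSpos, hMle] with ω h1 h2
    rw [Real.norm_eq_abs, abs_of_nonneg (div_nonneg h2.2 h1.le)]
    rw [div_le_one h1]
    exact h2.1
  have hint : Integrable (fun ω => M ω / S ω) Pr :=
    Integrable.mono' (integrable_const 1) (hM.div hS).aestronglyMeasurable hbound
  have hind : ∫ ω, A.indicator (fun _ => av/tv) ω ∂Pr = (av/tv) * (Pr A).toReal := by
    rw [integral_indicator_const _ hAmeas]
    simp [smul_eq_mul, mul_comm, Measure.real]
  have hmono : ∀ᵐ ω ∂Pr, A.indicator (fun _ => av/tv) ω ≤ M ω / S ω := by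
    filter_upwards [hSpos, hMle] with ω h1 h2
    by_cases hA : ω ∈ A
    · rw [Set.indicator_of_mem hA]
      exact div_le_div₀ h2.2 hA.1 h1 hA.2
    · rw [Set.indicator_of_notMem hA]
      exact div_nonneg h2.2 h1.le
  have hfinal : (av/tv) * (Pr A).toReal ≤ ∫ ω, M ω / S ω ∂Pr := by
    rw [← hind]
    exact integral_mono_ae ((integrable_const (av/tv)).indicator hAmeas) hint hmono
  have hIeq : (∫ ω, (⨆ i : Fin n, X i ω) / (∑ i : Fin n, X i ω) ∂Pr)
      = ∫ ω, M ω / S ω ∂Pr := by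
    refine integral_congr_ae ?_
    filter_upwards [hXYall] with ω hω
    rw [hMdef, hSdef]
    congr 1
    · exact iSup_congr hω
    · exact Finset.sum_congr rfl fun i _ => hω i
  rw [ge_iff_le, hIeq]
  refine le_trans ?_ hfinal
  have hrw : ((1/2 : ℝ) - Real.exp (-1))/2 * Real.log n / K = (av/tv) * (1/2 - Real.exp (-1)) := by
    rw [havdef, htvdef]
    field_simp
  rw [hrw]
  exact mul_le_mul_of_nonneg_left hAtoReal (div_nonneg hav0 htv0.le)
end

section
/- Let (Ω, 𝒫) be a probability space, n ≥ 1, λ > 0, a ≥ 0, and let k : Fin n → ℕ with k i ≥ 1 for all i. Let X : Fin n → Ω → ℝ be mutually independent random variables such that the law of X i is gammaMeasure (k i) λ (the Erlang(k i, λ) distribution). Then 𝒫{ ω | ∀ i ∈ Fin n, X i ω < a } ≤ ENNReal.ofReal( exp( − n · e^{−λa} ) ). In words: the probability that the maximum of the X_i is below a is at most exp(−n·e^{−λa}). -/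
open MeasureTheory ProbabilityTheory

lemma hasDerivAt_erlangF (c : ℝ) (m : ℕ) (x : ℝ) :
    HasDerivAt (fun y => Real.exp (-(c*y)) * ∑ j ∈ Finset.range (m+1), (c*y)^j / j.factorial)
      (-(c * (c*x)^m / m.factorial * Real.exp (-(c*x)))) x := by
  induction m with
  | zero =>
      have h := (((hasDerivAt_id x).const_mul c).neg).exp
      simp only [Finset.sum_range_one, pow_zero, Nat.factorial_zero, Nat.cast_one, div_one,
        mul_one]
      convert h using 1
      · funext y; simp
      · simp; ring
  | succ m ih =>
      have hexp : HasDerivAt (fun y => Real.exp (-(c*y))) (Real.exp (-(c*x)) * -(c*1)) x :=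
        (((hasDerivAt_id x).const_mul c).neg).exp
      have h1 : HasDerivAt (fun y => (c*y)^(m+1)) (((m:ℝ)+1) * (c*x)^m * c) x := by
        have := ((hasDerivAt_id x).const_mul c).fun_pow (m+1)
        simpa using this
      have hterm := hexp.fun_mul (h1.div_const ((m+1).factorial : ℝ))
      have hsum := ih.fun_add hterm
      have hfun : (fun y => Real.exp (-(c*y)) * ∑ j ∈ Finset.range (m+1+1), (c*y)^j / j.factorial)
          = fun y => (Real.exp (-(c*y)) * ∑ j ∈ Finset.range (m+1), (c*y)^j / j.factorial)
            + Real.exp (-(c*y)) * ((c*y)^(m+1) / ((m+1).factorial : ℝ)) := by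
        funext y
        rw [Finset.sum_range_succ, mul_add]
      rw [hfun]
      convert hsum using 1
      · rfl
      · rfl
      have hm : ((m.factorial : ℝ)) ≠ 0 := Nat.cast_ne_zero.mpr m.factorial_ne_zero
      have hm1 : (((m+1).factorial : ℝ)) ≠ 0 := Nat.cast_ne_zero.mpr (m+1).factorial_ne_zero
      have hfac : (((m+1).factorial : ℝ)) = ((m:ℝ)+1) * m.factorial := by
        rw [Nat.factorial_succ]; push_cast; ring
      rw [hfac]
      field_simp
      ring

lemma gammaPDFReal_erlang_eq (m : ℕ) {lam : ℝ} (hlam : 0 < lam) {x : ℝ} (hx : 0 ≤ x) :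
    gammaPDFReal ((m+1 : ℕ) : ℝ) lam x
      = lam * (lam*x)^m / m.factorial * Real.exp (-(lam*x)) := by
  rw [gammaPDFReal, if_pos hx]
  have h1 : lam ^ (((m+1 : ℕ) : ℝ)) = lam ^ (m+1) := Real.rpow_natCast lam (m+1)
  have h2 : x ^ ((((m+1 : ℕ) : ℝ)) - 1) = x ^ (m:ℕ) := by
    have : (((m+1 : ℕ) : ℝ)) - 1 = ((m : ℕ) : ℝ) := by push_cast; ring
    rw [this, Real.rpow_natCast]
  have h3 : Real.Gamma ((m+1 : ℕ) : ℝ) = (m.factorial : ℝ) := by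
    push_cast
    exact Real.Gamma_nat_eq_factorial m
  rw [h1, h2, h3, mul_pow]
  ring

lemma erlang_Iio_le (m : ℕ) {lam : ℝ} (hlam : 0 < lam) {a : ℝ} (ha : 0 ≤ a) :
    gammaMeasure ((m+1 : ℕ) : ℝ) lam (Set.Iio a)
      ≤ ENNReal.ofReal (1 - Real.exp (-(lam*a))) := by
  set F : ℝ → ℝ := fun y => Real.exp (-(lam*y)) * ∑ j ∈ Finset.range (m+1), (lam*y)^j / j.factorial with hF
  -- tail lower bound
  have hb : ∀ b, a ≤ b →
      ENNReal.ofReal (F a - F b) ≤ gammaMeasure ((m+1 : ℕ) : ℝ) lam (Set.Ici a) := by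
    intro b hab
    have hderiv : ∀ x ∈ Set.uIcc a b,
        HasDerivAt (fun y => -(F y)) (gammaPDFReal ((m+1 : ℕ) : ℝ) lam x) x := by
      intro x hx
      rw [Set.uIcc_of_le hab] at hx
      have hx0 : 0 ≤ x := ha.trans hx.1
      rw [gammaPDFReal_erlang_eq m hlam hx0]
      have := (hasDerivAt_erlangF lam m x).fun_neg
      simpa using this
    have hcont : ContinuousOn (gammaPDFReal ((m+1 : ℕ) : ℝ) lam) (Set.uIcc a b) := by
      have hc : Continuous (fun x : ℝ => lam * (lam*x)^m / m.factorial * Real.exp (-(lam*x))) := by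
        fun_prop
      refine hc.continuousOn.congr ?_
      intro x hx
      rw [Set.uIcc_of_le hab] at hx
      exact gammaPDFReal_erlang_eq m hlam (ha.trans hx.1)
    have hint : IntervalIntegrable (gammaPDFReal ((m+1 : ℕ) : ℝ) lam) volume a b :=
      hcont.intervalIntegrable
    have hFTC := intervalIntegral.integral_eq_sub_of_hasDerivAt hderiv hint
    have hIcc : ∫ x in Set.Icc a b, gammaPDFReal ((m+1 : ℕ) : ℝ) lam x = F a - F b := by
      rw [MeasureTheory.integral_Icc_eq_integral_Ioc,
        ← intervalIntegral.integral_of_le hab, hFTC]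
      ring
    have hIccInt : IntegrableOn (gammaPDFReal ((m+1 : ℕ) : ℝ) lam) (Set.Icc a b) volume := by
      rw [← Set.uIcc_of_le hab]
      exact hcont.integrableOn_uIcc
    have hnn : 0 ≤ᵐ[volume.restrict (Set.Icc a b)] gammaPDFReal ((m+1 : ℕ) : ℝ) lam :=
      Filter.Eventually.of_forall (gammaPDFReal_nonneg (by positivity) hlam)
    have hlin : ENNReal.ofReal (F a - F b)
        = ∫⁻ x in Set.Icc a b, gammaPDF ((m+1 : ℕ) : ℝ) lam x := by
      rw [← hIcc, MeasureTheory.ofReal_integral_eq_lintegral_ofReal hIccInt hnn]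
      rfl
    rw [hlin, gammaMeasure, withDensity_apply _ measurableSet_Ici]
    exact lintegral_mono_set Set.Icc_subset_Ici_self
  -- F tends to 0 at infinity
  have hF0 : Filter.Tendsto F Filter.atTop (nhds 0) := by
    have hfun : F = fun y => ∑ j ∈ Finset.range (m+1),
        ((lam*y)^j * Real.exp (-(lam*y))) / j.factorial := by
      funext y
      show Real.exp (-(lam*y)) * ∑ j ∈ Finset.range (m+1), (lam*y)^j / j.factorial = _
      rw [Finset.mul_sum]
      exact Finset.sum_congr rfl fun j _ => by ring
    rw [hfun]
    have h0 : Filter.Tendsto (fun y : ℝ => lam * y) Filter.atTop Filter.atTop :=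
      Filter.Tendsto.const_mul_atTop hlam Filter.tendsto_id
    have := Finset.range (m+1)
    have hsum : Filter.Tendsto (fun y => ∑ j ∈ Finset.range (m+1),
        ((lam*y)^j * Real.exp (-(lam*y))) / j.factorial) Filter.atTop
        (nhds (∑ j ∈ Finset.range (m+1), (0:ℝ))) := by
      refine tendsto_finset_sum _ fun j _ => ?_
      have := ((Real.tendsto_pow_mul_exp_neg_atTop_nhds_zero j).comp h0).div_const
        ((j.factorial : ℝ))
      simpa using this
    simpa using hsum
  -- measure of Ici a is at least exp(-(lam a))
  have hIci : ENNReal.ofReal (Real.exp (-(lam*a)))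
      ≤ gammaMeasure ((m+1 : ℕ) : ℝ) lam (Set.Ici a) := by
    have hFa : Real.exp (-(lam*a)) ≤ F a := by
      have hone : 1 ≤ ∑ j ∈ Finset.range (m+1), (lam*a)^j / j.factorial := by
        have h0mem : 0 ∈ Finset.range (m+1) := Finset.mem_range.mpr (Nat.succ_pos m)
        have := Finset.single_le_sum (f := fun j => (lam*a)^j / (j.factorial : ℝ))
          (fun j _ => by positivity) h0mem
        simpa using this
      have := mul_le_mul_of_nonneg_left hone (Real.exp_nonneg (-(lam*a)))
      simpa [hF] using this
    have hlim : Filter.Tendsto (fun b => ENNReal.ofReal (F a - F b)) Filter.atTop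
        (nhds (ENNReal.ofReal (F a))) := by
      have h1 : Filter.Tendsto (fun b => F a - F b) Filter.atTop (nhds (F a - 0)) :=
        tendsto_const_nhds.sub hF0
      rw [sub_zero] at h1
      exact (ENNReal.continuous_ofReal.tendsto _).comp h1
    have hle : ENNReal.ofReal (F a) ≤ gammaMeasure ((m+1 : ℕ) : ℝ) lam (Set.Ici a) := by
      refine le_of_tendsto hlim ?_
      filter_upwards [Filter.eventually_ge_atTop a] with b hab using hb b hab
    exact (ENNReal.ofReal_le_ofReal hFa).trans hle
  have hprob : IsProbabilityMeasure (gammaMeasure ((m+1 : ℕ) : ℝ) lam) :=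
    isProbabilityMeasure_gammaMeasure (by positivity) hlam
  have hcompl : gammaMeasure ((m+1 : ℕ) : ℝ) lam (Set.Iio a)
      = 1 - gammaMeasure ((m+1 : ℕ) : ℝ) lam (Set.Ici a) := by
    rw [← Set.compl_Ici, prob_compl_eq_one_sub measurableSet_Ici]
  rw [hcompl]
  calc 1 - gammaMeasure ((m+1 : ℕ) : ℝ) lam (Set.Ici a)
      ≤ 1 - ENNReal.ofReal (Real.exp (-(lam*a))) := tsub_le_tsub_left hIci 1
    _ = ENNReal.ofReal (1 - Real.exp (-(lam*a))) := by
        rw [ENNReal.ofReal_sub _ (Real.exp_nonneg _), ENNReal.ofReal_one]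

/-- For independent `X_i ∼ Erlang(k_i, λ)`, the probability that all `X_i` lie below `a`
(i.e. that the maximum is below `a`) is at most `exp(−n·e^{−λa})`. -/
theorem prob_max_erlang_lt_le
    {Ω : Type} [MeasurableSpace Ω] (Pr : Measure Ω) [IsProbabilityMeasure Pr]
    (n : ℕ) (hn : 1 ≤ n) (lam : ℝ) (hlam : 0 < lam) (a : ℝ) (ha : 0 ≤ a)
    (k : Fin n → ℕ) (hk : ∀ i, 1 ≤ k i)
    (X : Fin n → Ω → ℝ)
    (hindep : iIndepFun X Pr)
    (hlaw : ∀ i, Measure.map (X i) Pr = gammaMeasure (k i : ℝ) lam) :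
    Pr {ω | ∀ i : Fin n, X i ω < a} ≤
      ENNReal.ofReal (Real.exp (-((n : ℝ) * Real.exp (-(lam * a))))) := by
  have hXm : ∀ i, AEMeasurable (X i) Pr := by
    intro i
    by_contra h
    have hzero := hlaw i
    rw [Measure.map_of_not_aemeasurable h] at hzero
    have hP : IsProbabilityMeasure (gammaMeasure (k i : ℝ) lam) :=
      isProbabilityMeasure_gammaMeasure (by exact_mod_cast Nat.lt_of_lt_of_le Nat.zero_lt_one (hk i)) hlam
    have h1 : gammaMeasure (k i : ℝ) lam Set.univ = 1 := hP.measure_univ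
    rw [← hzero] at h1
    simp at h1
  have hset : {ω | ∀ i : Fin n, X i ω < a} = ⋂ i ∈ Finset.univ, X i ⁻¹' Set.Iio a := by
    ext ω; simp [Set.mem_iInter]
  have hmul := hindep.measure_inter_preimage_eq_mul Finset.univ
    (sets := fun _ => Set.Iio a) (fun i _ => measurableSet_Iio)
  have hfac : ∀ i : Fin n, Pr (X i ⁻¹' Set.Iio a) ≤ ENNReal.ofReal (1 - Real.exp (-(lam*a))) := by
    intro i
    rw [← Measure.map_apply_of_aemeasurable (hXm i) measurableSet_Iio, hlaw i]
    obtain ⟨m, hm⟩ : ∃ m, k i = m + 1 := ⟨k i - 1, (Nat.succ_pred_eq_of_pos (hk i)).symm⟩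
    rw [hm]
    exact erlang_Iio_le m hlam ha
  have hexp1 : Real.exp (-(lam*a)) ≤ 1 := by
    rw [Real.exp_le_one_iff]
    nlinarith
  have hc0 : 0 ≤ 1 - Real.exp (-(lam*a)) := by linarith
  calc Pr {ω | ∀ i : Fin n, X i ω < a}
      = ∏ i : Fin n, Pr (X i ⁻¹' Set.Iio a) := by rw [hset, hmul]
    _ ≤ ∏ _i : Fin n, ENNReal.ofReal (1 - Real.exp (-(lam*a))) :=
        Finset.prod_le_prod' fun i _ => hfac i
    _ = ENNReal.ofReal ((1 - Real.exp (-(lam*a)))^n) := by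
        rw [Finset.prod_const, Finset.card_univ, Fintype.card_fin, ENNReal.ofReal_pow hc0]
    _ ≤ ENNReal.ofReal (Real.exp (-((n : ℝ) * Real.exp (-(lam * a))))) := by
        apply ENNReal.ofReal_le_ofReal
        have h1 : 1 - Real.exp (-(lam*a)) ≤ Real.exp (-(Real.exp (-(lam*a)))) := by
          have := Real.add_one_le_exp (-(Real.exp (-(lam*a))))
          linarith
        calc (1 - Real.exp (-(lam*a)))^n
            ≤ (Real.exp (-(Real.exp (-(lam*a)))))^n := pow_le_pow_left₀ hc0 h1 n
          _ = Real.exp (-((n : ℝ) * Real.exp (-(lam * a)))) := by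
              rw [← Real.exp_nat_mul]; ring_nf
end
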